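/- arXiv:2501.11393 — 7 statements merged into one kernel-verified Lean document; each statement's English description precedes it below -/
import Mathlib

section
/- Let m ≥ 4 and n = 2^m. For any pair of distinct codewords x, y ∈ RM(m,1) having the same first bit (x_1 = y_1), the coefficients satisfy |α_x − α_y| ≥ 0.06 − 3·Σ_{k=16}^{n/2} k·(1/2)^k. -/
open Finset

/-- Number of deletions in a deletion pattern (number of `1`s in `ω`). -/
def wt {n : ℕ} (ω : Fin n → Bool) : ℕ := (univ.filter fun j => ω j = true).card

/-- Trace of `x` under deletion pattern `ω`: the subsequence of bits `x j`
at the positions `j` with `ω j = 0`, in increasing order of position. -/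
def trc {n : ℕ} (x ω : Fin n → Bool) : List Bool :=
  ((List.finRange n).filter fun j => ω j = false).map x

/-- Total number of runs (maximal blocks of equal bits) in a binary list. -/
def numRuns (l : List Bool) : ℕ := (l.destutter (· ≠ ·)).length

/-- Number of runs of `0`s in a binary list. -/
def numZeroRuns (l : List Bool) : ℕ := (l.destutter (· ≠ ·)).count false

/-- Number of runs of `1`s in a binary list. -/
def numOneRuns (l : List Bool) : ℕ := (l.destutter (· ≠ ·)).count true

/-- The first-order Reed-Muller code `RM(m,1)`: evaluation vectors of affine
Boolean polynomials `u₀ + u₁x₁ + ⋯ + u_mx_m`, coordinates indexed by the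
`2^m` evaluation points in lexicographic order. -/
def RM1 (m : ℕ) : Set (Fin (2 ^ m) → Bool) :=
  { x | ∃ (u0 : Bool) (u : Fin m → Bool), ∀ t : Fin (2 ^ m),
      x t = (u0 ^^ decide ((univ.filter fun i : Fin m =>
        u i = true ∧ (t : ℕ).testBit (i : ℕ) = true).card % 2 = 1)) }

/-- The coefficient `α_x`. -/
noncomputable def alphaC {n : ℕ} (x : Fin n → Bool) : ℝ :=
  (∑ i ∈ univ.filter (fun i : Fin n => x i = false),
     ∑ j ∈ univ.filter (fun j : Fin n => x j = false ∧ i < j),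
       ((1:ℝ)/2) ^ ((j : ℕ) - (i : ℕ)))
  + ∑ i ∈ univ.filter (fun i : Fin n => x i = true),
      ∑ j ∈ univ.filter (fun j : Fin n => x j = true ∧ i < j),
        ((1:ℝ)/2) ^ ((j : ℕ) - (i : ℕ))

/-- The coefficient `β_x`. -/
noncomputable def betaC {n : ℕ} (x : Fin n → Bool) : ℝ :=
  (∑ i ∈ univ.filter (fun i : Fin n => x i = false),
     ∑ j ∈ univ.filter (fun j : Fin n => x j = false ∧ i < j),
       ((1:ℝ)/2) ^ (n - ((j : ℕ) - (i : ℕ))))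
  + ∑ i ∈ univ.filter (fun i : Fin n => x i = true),
      ∑ j ∈ univ.filter (fun j : Fin n => x j = true ∧ i < j),
        ((1:ℝ)/2) ^ (n - ((j : ℕ) - (i : ℕ)))

/-- The coefficient `γ_x`. -/
noncomputable def gammaC {n : ℕ} (x : Fin n → Bool) : ℝ :=
  (∑ i ∈ univ.filter (fun i : Fin n => x i = false),
     ∑ j ∈ univ.filter (fun j : Fin n => x j = true ∧ i < j),
       ((1:ℝ)/2) ^ (n - ((j : ℕ) - (i : ℕ))))
  + ∑ i ∈ univ.filter (fun i : Fin n => x i = true),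
      ∑ j ∈ univ.filter (fun j : Fin n => x j = false ∧ i < j),
        ((1:ℝ)/2) ^ (n - ((j : ℕ) - (i : ℕ)))

/-- The coefficient `δ_x`. -/
noncomputable def deltaC {n : ℕ} (x : Fin n → Bool) : ℝ :=
  (∑ i ∈ univ.filter (fun i : Fin n => x i = false),
     ∑ j ∈ univ.filter (fun j : Fin n => x j = true ∧ i < j),
       ((1:ℝ)/2) ^ ((j : ℕ) - (i : ℕ)))
  + ∑ i ∈ univ.filter (fun i : Fin n => x i = true),
      ∑ j ∈ univ.filter (fun j : Fin n => x j = false ∧ i < j),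
        ((1:ℝ)/2) ^ ((j : ℕ) - (i : ℕ))

namespace RMGap
set_option maxHeartbeats 1000000

noncomputable def rr (t : ℕ) : ℝ := (1/2)^(2^t)

lemma rr_pos (t : ℕ) : 0 < rr t := by unfold rr; positivity
lemma rr_le_half (t : ℕ) : rr t ≤ 1/2 := by
  have h1 : 1 ≤ 2^t := Nat.one_le_two_pow
  calc rr t ≤ ((1:ℝ)/2)^1 := pow_le_pow_of_le_one (by norm_num) (by norm_num) h1
    _ = 1/2 := pow_one _
lemma rr_succ (t : ℕ) : rr (t+1) = (rr t)^2 := by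
  unfold rr; rw [← pow_mul, pow_succ]

noncomputable def Sr (a : ℕ → ℝ) : ℕ → ℕ → ℝ
  | _, 0 => 1
  | t, (J+1) => 1 + (1/2) * a (t+1) * (1 + a t * rr t)^2 * Sr a (t+1) J

lemma Sr_bounds (a : ℕ → ℝ) (ha : ∀ i, a i = 1 ∨ a i = -1) :
    ∀ J t, (1 - a t * rr t) * Sr a t J ≤ 2 - (1/2)^J * (1 + a t * rr t) ∧
      (1 + (rr t)^2) * (1 - Sr a t J) ≤ (1 + a t * rr t)^2 * (1 - (1/2)^J * (1 - (rr t)^2)) := by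
  intro J
  induction J with
  | zero =>
    intro t
    have hr := rr_pos t
    have hr2 := rr_le_half t
    rcases ha t with h | h <;> rw [h] <;> constructor <;>
      simp only [Sr, pow_zero] <;> nlinarith [sq_nonneg (rr t)]
  | succ J IH =>
    intro t
    have hr := rr_pos t
    have hr2 := rr_le_half t
    obtain ⟨hIHu, hIHl⟩ := IH (t+1)
    rw [rr_succ t] at hIHu hIHl
    set r := rr t with hrdef
    set S' := Sr a (t+1) J with hS'
    have hh : (0:ℝ) < (1/2:ℝ)^J := by positivity
    have hh1 : ((1:ℝ)/2)^J ≤ 1 := by apply pow_le_one₀ <;> norm_num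
    set h : ℝ := (1/2:ℝ)^J with hhdef
    have hpow : ((1:ℝ)/2)^(J+1) = h/2 := by rw [pow_succ]; ring
    have hr4 : (0:ℝ) < 1+r^4 := by positivity
    have hr2p : (0:ℝ) < 1+r^2 := by positivity
    have e1 : (1-r^2)*(1+r^4) ≤ (1-r^4)*(1+r^2)^3 := by
      have h1 : (1:ℝ)-r^2 ≤ 1-r^4 := by nlinarith [pow_le_pow_of_le_one hr.le (show r ≤ 1 by linarith) (show 2 ≤ 4 by norm_num)]
      have h2 : (1:ℝ)+r^4 ≤ (1+r^2)^3 := by nlinarith [sq_nonneg r, pow_pos hr 4, pow_pos hr 6]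
      exact mul_le_mul h1 h2 (by positivity) (by nlinarith [sq_nonneg r, sq_nonneg (r*r)])
    have he1 : (0:ℝ) ≤ h * ((1-r^4)*(1+r^2)^3 - (1-r^2)*(1+r^4)) :=
      mul_nonneg hh.le (by linarith)
    rcases ha t with hs | hs <;> rcases ha (t+1) with hb | hb <;>
        rw [hs] <;> simp only [Sr, hb, hs, ← hrdef, ← hS', hpow] <;> rw [hb] at hIHu hIHl
    -- σ = 1, b = 1
    · have k1 : -2*r^2*(1+r^2) + h*(1-r^4)*(1+r^2)^3 ≤ (1+r^2)*(1+r^4)*S' := by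
        nlinarith [mul_le_mul_of_nonneg_left hIHl hr2p.le]
      have aux : -((1+r^2)*S')/2 ≤ 1-(h/2)*(1-r^2) := by
        nlinarith [k1, he1, hr4, sq_nonneg r]
      constructor
      · nlinarith [mul_le_mul_of_nonneg_left hIHu (show (0:ℝ) ≤ (1+r)/2 by nlinarith),
          mul_nonneg (mul_nonneg hh.le hr.le) (mul_nonneg hr.le hr.le)]
      · calc (1 + r^2) * (1 - (1 + 1/2 * 1 * (1 + 1*r)^2 * S'))
            = (1+1*r)^2 * (-((1+r^2)*S')/2) := by ring
          _ ≤ (1+1*r)^2 * (1-(h/2)*(1-r^2)) := mul_le_mul_of_nonneg_left aux (sq_nonneg _)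
          _ = (1+1*r)^2 * (1 - h/2*(1-r^2)) := by ring
    -- σ = 1, b = -1
    · have e2 : (0:ℝ) ≤ 1-2*r^2+2*r^6-r^8 := by nlinarith [sq_nonneg r, sq_nonneg (r*r), sq_nonneg (r*r*r*r), sq_nonneg (1-r^2)]
      have hS0 : 0 ≤ S' := by
        nlinarith [hIHl, mul_nonneg hh.le e2, hr4, sq_nonneg r]
      have aux : ((1+r^2)*S')/2 ≤ 1-(h/2)*(1-r^2) := by linarith
      constructor
      · nlinarith [mul_nonneg (mul_nonneg (show (0:ℝ) ≤ 1-r by linarith) (sq_nonneg (1+r))) hS0,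
          mul_nonneg hh.le hr.le]
      · calc (1 + r^2) * (1 - (1 + 1/2 * (-1) * (1 + 1*r)^2 * S'))
            = (1+1*r)^2 * (((1+r^2)*S')/2) := by ring
          _ ≤ (1+1*r)^2 * (1-(h/2)*(1-r^2)) := mul_le_mul_of_nonneg_left aux (sq_nonneg _)
          _ = (1+1*r)^2 * (1 - h/2*(1-r^2)) := by ring
    -- σ = -1, b = 1
    · have k1 : -2*r^2*(1+r^2) + h*(1-r^4)*(1+r^2)^3 ≤ (1+r^2)*(1+r^4)*S' := by
        nlinarith [mul_le_mul_of_nonneg_left hIHl hr2p.le]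
      have aux : -((1+r^2)*S')/2 ≤ 1-(h/2)*(1-r^2) := by
        nlinarith [k1, he1, hr4, sq_nonneg r]
      constructor
      · nlinarith [mul_le_mul_of_nonneg_left hIHu (show (0:ℝ) ≤ (1-r)/2 by nlinarith),
          mul_nonneg (mul_nonneg hh.le hr.le) (mul_nonneg hr.le hr.le)]
      · calc (1 + r^2) * (1 - (1 + 1/2 * 1 * (1 + (-1)*r)^2 * S'))
            = (1+(-1)*r)^2 * (-((1+r^2)*S')/2) := by ring
          _ ≤ (1+(-1)*r)^2 * (1-(h/2)*(1-r^2)) := mul_le_mul_of_nonneg_left aux (sq_nonneg _)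
          _ = (1+(-1)*r)^2 * (1 - h/2*(1-r^2)) := by ring
    -- σ = -1, b = -1
    · have e2 : (0:ℝ) ≤ 1-2*r^2+2*r^6-r^8 := by nlinarith [sq_nonneg r, sq_nonneg (r*r), sq_nonneg (r*r*r*r), sq_nonneg (1-r^2)]
      have hS0 : 0 ≤ S' := by
        nlinarith [hIHl, mul_nonneg hh.le e2, hr4, sq_nonneg r]
      have aux : ((1+r^2)*S')/2 ≤ 1-(h/2)*(1-r^2) := by linarith
      constructor
      · nlinarith [mul_nonneg (mul_nonneg (show (0:ℝ) ≤ 1+r by linarith) (sq_nonneg (1-r))) hS0,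
          mul_nonneg hh.le hr.le]
      · calc (1 + r^2) * (1 - (1 + 1/2 * (-1) * (1 + (-1)*r)^2 * S'))
            = (1+(-1)*r)^2 * (((1+r^2)*S')/2) := by ring
          _ ≤ (1+(-1)*r)^2 * (1-(h/2)*(1-r^2)) := mul_le_mul_of_nonneg_left aux (sq_nonneg _)
          _ = (1+(-1)*r)^2 * (1 - h/2*(1-r^2)) := by ring

noncomputable def wp (a : ℕ → ℝ) (m t : ℕ) : ℝ :=
  ∏ i ∈ range m, if t.testBit i then a i else 1
noncomputable def Gm (a : ℕ → ℝ) (m : ℕ) : ℝ := ∑ t ∈ range (2^m), 2^t * wp a m t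
noncomputable def Hm (a : ℕ → ℝ) (m : ℕ) : ℝ := ∑ t ∈ range (2^m), (1/2)^t * wp a m t
noncomputable def Tm (a : ℕ → ℝ) (m : ℕ) : ℝ :=
  ∑ i ∈ range (2^m), ∑ j ∈ range (2^m),
    if i < j then (2:ℝ)^i * (1/2)^j * wp a m i * wp a m j else 0
noncomputable def eps (a : ℕ → ℝ) (k : ℕ) : ℝ := ∏ i ∈ range k, a i
noncomputable def Qm (a : ℕ → ℝ) (k : ℕ) : ℝ := ∏ i ∈ range k, (1 + a i * rr i)^2

lemma wp_lt (a : ℕ → ℝ) (m t : ℕ) (h : t < 2^m) : wp a (m+1) t = wp a m t := by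
  unfold wp
  rw [prod_range_succ, Nat.testBit_lt_two_pow h]
  simp

lemma wp_add (a : ℕ → ℝ) (m t : ℕ) (h : t < 2^m) :
    wp a (m+1) (2^m + t) = a m * wp a m t := by
  unfold wp
  rw [prod_range_succ, Nat.testBit_two_pow_add_eq, Nat.testBit_lt_two_pow h]
  rw [mul_comm]
  simp only [Bool.not_false, if_true]
  congr 1
  apply prod_congr rfl
  intro i hi
  rw [Nat.testBit_two_pow_add_gt (mem_range.mp hi) t]

lemma two_pow_succ (m : ℕ) : 2^(m+1) = 2^m + 2^m := by omega

lemma sum_split (f : ℕ → ℝ) (m : ℕ) :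
    ∑ t ∈ range (2^(m+1)), f t = ∑ t ∈ range (2^m), f t + ∑ t ∈ range (2^m), f (2^m + t) := by
  rw [two_pow_succ, Finset.sum_range_add]

lemma Gm_succ (a : ℕ → ℝ) (m : ℕ) :
    Gm a (m+1) = (1 + a m * 2^(2^m)) * Gm a m := by
  unfold Gm
  rw [sum_split]
  have h1 : ∑ t ∈ range (2^m), (2:ℝ)^t * wp a (m+1) t = ∑ t ∈ range (2^m), 2^t * wp a m t := by
    apply sum_congr rfl; intro t ht; rw [wp_lt a m t (mem_range.mp ht)]
  have h2 : ∑ t ∈ range (2^m), (2:ℝ)^(2^m+t) * wp a (m+1) (2^m+t)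
      = a m * 2^(2^m) * ∑ t ∈ range (2^m), 2^t * wp a m t := by
    rw [mul_sum]
    apply sum_congr rfl; intro t ht
    rw [wp_add a m t (mem_range.mp ht), pow_add]
    ring
  rw [h1, h2]; ring

lemma Hm_succ (a : ℕ → ℝ) (m : ℕ) :
    Hm a (m+1) = (1 + a m * (1/2)^(2^m)) * Hm a m := by
  unfold Hm
  rw [sum_split]
  have h1 : ∑ t ∈ range (2^m), ((1:ℝ)/2)^t * wp a (m+1) t
      = ∑ t ∈ range (2^m), (1/2)^t * wp a m t := by
    apply sum_congr rfl; intro t ht; rw [wp_lt a m t (mem_range.mp ht)]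
  have h2 : ∑ t ∈ range (2^m), ((1:ℝ)/2)^(2^m+t) * wp a (m+1) (2^m+t)
      = a m * (1/2)^(2^m) * ∑ t ∈ range (2^m), (1/2)^t * wp a m t := by
    rw [mul_sum]
    apply sum_congr rfl; intro t ht
    rw [wp_add a m t (mem_range.mp ht), pow_add]
    ring
  rw [h1, h2]; ring

lemma Tm_succ (a : ℕ → ℝ) (ha : ∀ i, a i = 1 ∨ a i = -1) (m : ℕ) :
    Tm a (m+1) = 2 * Tm a m + a m * (1/2)^(2^m) * Gm a m * Hm a m := by
  have ham : a m * a m = 1 := by rcases ha m with h | h <;> rw [h] <;> norm_num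
  unfold Tm
  rw [sum_split]
  have hinner1 : ∀ i ∈ range (2^m),
      (∑ j ∈ range (2^(m+1)), if i < j then (2:ℝ)^i * (1/2)^j * wp a (m+1) i * wp a (m+1) j else 0)
      = (∑ j ∈ range (2^m), if i < j then (2:ℝ)^i * (1/2)^j * wp a m i * wp a m j else 0)
        + (2:ℝ)^i * wp a m i * (a m * (1/2)^(2^m) * ∑ j ∈ range (2^m), (1/2)^j * wp a m j) := by
    intro i hi
    have hi' := mem_range.mp hi
    rw [sum_split]
    congr 1
    · apply sum_congr rfl; intro j hj
      rw [wp_lt a m i hi', wp_lt a m j (mem_range.mp hj)]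
    · rw [mul_sum, mul_sum]
      apply sum_congr rfl; intro j hj
      have hij : i < 2^m + j := by omega
      rw [if_pos hij, wp_lt a m i hi', wp_add a m j (mem_range.mp hj), pow_add]
      ring
  have hinner2 : ∀ i ∈ range (2^m),
      (∑ j ∈ range (2^(m+1)), if 2^m + i < j then (2:ℝ)^(2^m+i) * (1/2)^j * wp a (m+1) (2^m+i) * wp a (m+1) j else 0)
      = ∑ j ∈ range (2^m), if i < j then (2:ℝ)^i * (1/2)^j * wp a m i * wp a m j else 0 := by
    intro i hi
    have hi' := mem_range.mp hi
    rw [sum_split]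
    have hz : (∑ j ∈ range (2^m), if 2^m + i < j then (2:ℝ)^(2^m+i) * (1/2)^j * wp a (m+1) (2^m+i) * wp a (m+1) j else 0) = 0 := by
      apply sum_eq_zero; intro j hj
      have : ¬ (2^m + i < j) := by have := mem_range.mp hj; omega
      rw [if_neg this]
    rw [hz, zero_add]
    apply sum_congr rfl; intro j hj
    by_cases h : i < j
    · rw [if_pos (show 2^m + i < 2^m + j by omega), if_pos h,
        wp_add a m i hi', wp_add a m j (mem_range.mp hj), pow_add, pow_add]
      have h2 : (2:ℝ)^(2^m) * (1/2:ℝ)^(2^m) = 1 := by rw [← mul_pow]; norm_num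
      calc (2:ℝ)^(2^m)*2^i * ((1/2:ℝ)^(2^m)*(1/2)^j) * (a m * wp a m i) * (a m * wp a m j)
          = ((2:ℝ)^(2^m)*(1/2:ℝ)^(2^m)) * (a m * a m) * (2^i*(1/2)^j*wp a m i*wp a m j) := by ring
        _ = 2^i*(1/2)^j*wp a m i*wp a m j := by rw [h2, ham]; ring
    · rw [if_neg (show ¬ (2^m + i < 2^m + j) by omega), if_neg h]
  rw [sum_congr rfl hinner1, sum_congr rfl hinner2, sum_add_distrib, ← sum_mul]
  unfold Gm Hm
  ring
lemma GH (a : ℕ → ℝ) (ha : ∀ i, a i = 1 ∨ a i = -1) :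
    ∀ m, 2 * (Gm a m * Hm a m) = eps a m * 2^(2^m) * Qm a m := by
  intro m
  induction m with
  | zero =>
    unfold Gm Hm eps Qm
    norm_num [wp]
  | succ m IH =>
    have ham : a m * a m = 1 := by rcases ha m with h | h <;> rw [h] <;> norm_num
    rw [Gm_succ, Hm_succ]
    have key : (1 + a m * 2^(2^m)) * (1 + a m * (1/2)^(2^m))
        = a m * 2^(2^m) * (1 + a m * rr m)^2 := by
      have h2 : (2:ℝ)^(2^m) * (1/2:ℝ)^(2^m) = 1 := by rw [← mul_pow]; norm_num
      have hrr : rr m = (1/2:ℝ)^(2^m) := rfl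
      rw [hrr]
      linear_combination (-(1 + a m * (1/2:ℝ)^(2^m))) * h2 - ((2:ℝ)^(2^m)*(1/2:ℝ)^(2^m) + a m * (2:ℝ)^(2^m) * ((1/2:ℝ)^(2^m))^2) * ham
    calc 2 * ((1 + a m * 2^(2^m)) * Gm a m * ((1 + a m * (1/2)^(2^m)) * Hm a m))
        = ((1 + a m * 2^(2^m)) * (1 + a m * (1/2)^(2^m))) * (2 * (Gm a m * Hm a m)) := by ring
      _ = (a m * 2^(2^m) * (1 + a m * rr m)^2) * (eps a m * 2^(2^m) * Qm a m) := by rw [key, IH]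
      _ = eps a (m+1) * (2^(2^m) * 2^(2^m)) * Qm a (m+1) := by
          unfold eps Qm
          rw [prod_range_succ, prod_range_succ]
          ring
      _ = eps a (m+1) * 2^(2^(m+1)) * Qm a (m+1) := by
          rw [← pow_add, two_pow_succ]

lemma Tm_closed (a : ℕ → ℝ) (ha : ∀ i, a i = 1 ∨ a i = -1) :
    ∀ m, Tm a m = ∑ k ∈ range m, (2:ℝ)^(m-1-k) * (eps a (k+1) * Qm a k) / 2 := by
  intro m
  induction m with
  | zero => simp [Tm]
  | succ m IH =>
    have hcross : a m * (1/2)^(2^m) * Gm a m * Hm a m = eps a (m+1) * Qm a m / 2 := by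
      have := GH a ha m
      have h2 : (2:ℝ)^(2^m) * (1/2:ℝ)^(2^m) = 1 := by rw [← mul_pow]; norm_num
      have heps : eps a (m+1) = eps a m * a m := by unfold eps; rw [prod_range_succ]
      calc a m * (1/2)^(2^m) * Gm a m * Hm a m
          = a m * (1/2)^(2^m) * (Gm a m * Hm a m) := by ring
        _ = a m * (1/2)^(2^m) * (eps a m * 2^(2^m) * Qm a m / 2) := by rw [← this]; ring
        _ = (eps a m * a m) * Qm a m / 2 * ((1/2)^(2^m) * 2^(2^m)) := by ring
        _ = eps a (m+1) * Qm a m / 2 := by rw [heps, mul_comm ((1/2:ℝ)^(2^m)), h2]; ring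
    rw [Tm_succ a ha m, IH, hcross, sum_range_succ, mul_sum]
    have hee : ∀ k ∈ range m,
        2 * ((2:ℝ)^(m-1-k) * (eps a (k+1) * Qm a k) / 2) = (2:ℝ)^(m+1-1-k) * (eps a (k+1) * Qm a k) / 2 := by
      intro k hk
      have hk' := mem_range.mp hk
      have : (m+1-1-k) = (m-1-k) + 1 := by omega
      rw [this, pow_succ]
      ring
    rw [sum_congr rfl hee]
    have : (m+1-1-m) = 0 := by omega
    rw [this, pow_zero]
    ring

lemma tail_eq (a : ℕ → ℝ) :
    ∀ J t, ∑ j ∈ range (J+1), (2:ℝ)^(J-j) * (eps a (t+1+j) * Qm a (t+j)) / 2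
      = 2^J * (eps a t * a t * Qm a t) * Sr a t J / 2 := by
  intro J
  induction J with
  | zero =>
    intro t
    simp only [Sr, zero_add, range_one, sum_singleton, Nat.sub_zero, pow_zero, Nat.add_zero]
    have : eps a (t+1) = eps a t * a t := by unfold eps; rw [prod_range_succ]
    rw [this]; ring
  | succ J IH =>
    intro t
    rw [Finset.sum_range_succ']
    have h1 : ∀ j ∈ range (J+1),
        (2:ℝ)^(J+1-(j+1)) * (eps a (t+1+(j+1)) * Qm a (t+(j+1))) / 2
        = (2:ℝ)^(J-j) * (eps a ((t+1)+1+j) * Qm a ((t+1)+j)) / 2 := by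
      intro j hj
      have e1 : J+1-(j+1) = J-j := by omega
      have e2 : t+1+(j+1) = (t+1)+1+j := by omega
      have e3 : t+(j+1) = (t+1)+j := by omega
      rw [e1, e2, e3]
    rw [sum_congr rfl h1, IH (t+1)]
    have heps1 : eps a (t+1) = eps a t * a t := by unfold eps; rw [prod_range_succ]
    have heps2 : eps a (t+1) * a (t+1) = eps a t * a t * a (t+1) := by rw [heps1]
    have hQ : Qm a (t+1) = Qm a t * (1 + a t * rr t)^2 := by
      unfold Qm; rw [prod_range_succ]
    simp only [Nat.sub_zero, Nat.add_zero, Sr]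
    rw [heps2, hQ, heps1, pow_succ]
    ring

lemma eps_pm (a : ℕ → ℝ) (ha : ∀ i, a i = 1 ∨ a i = -1) (k : ℕ) :
    eps a k = 1 ∨ eps a k = -1 := by
  induction k with
  | zero => left; simp [eps]
  | succ k IH =>
    unfold eps at *
    rw [prod_range_succ]
    rcases IH with h | h <;> rcases ha k with h' | h' <;> rw [h, h'] <;> norm_num

lemma Qm_nonneg (a : ℕ → ℝ) (k : ℕ) : 0 ≤ Qm a k :=
  prod_nonneg (fun i _ => sq_nonneg _)

lemma Tm_diff (a b : ℕ → ℝ) (ha : ∀ i, a i = 1 ∨ a i = -1) (hb : ∀ i, b i = 1 ∨ b i = -1)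
    (s m : ℕ) (hsm : s < m) (hlow : ∀ i, i < s → a i = b i) (hs : a s = - b s) :
    Qm a s * (1 - (rr s)^2) ≤ |Tm a m - Tm b m| := by
  set J := m - s - 1 with hJ
  have hm : m = s + (J + 1) := by omega
  -- closed forms
  have hAc := Tm_closed a ha m
  have hBc := Tm_closed b hb m
  -- split sums
  have hsplit : ∀ c : ℕ → ℝ, (∀ i, c i = 1 ∨ c i = -1) →
      Tm c m = (∑ k ∈ range s, (2:ℝ)^(m-1-k) * (eps c (k+1) * Qm c k) / 2)
        + 2^J * (eps c s * c s * Qm c s) * Sr c s J / 2 := by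
    intro c hc
    rw [Tm_closed c hc m, hm, Finset.sum_range_add, ← tail_eq c J s]
    congr 1
    apply sum_congr rfl
    intro j hj
    have e1 : s + (J + 1) - 1 - (s + j) = J - j := by omega
    have e2 : s + j + 1 = s + 1 + j := by omega
    rw [e1, e2]
  have hQeq : Qm a s = Qm b s := by
    unfold Qm; apply prod_congr rfl; intro i hi; rw [hlow i (mem_range.mp hi)]
  have hepseq : ∀ k, k ≤ s → eps a k = eps b k := by
    intro k hk
    unfold eps; apply prod_congr rfl; intro i hi
    exact hlow i (by have := mem_range.mp hi; omega)
  have hhead : (∑ k ∈ range s, (2:ℝ)^(m-1-k) * (eps a (k+1) * Qm a k) / 2)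
      = ∑ k ∈ range s, (2:ℝ)^(m-1-k) * (eps b (k+1) * Qm b k) / 2 := by
    apply sum_congr rfl; intro k hk
    have hk' := mem_range.mp hk
    rw [hepseq (k+1) (by omega)]
    have : Qm a k = Qm b k := by
      unfold Qm; apply prod_congr rfl; intro i hi
      rw [hlow i (by have := mem_range.mp hi; omega)]
    rw [this]
  have hdiff : Tm a m - Tm b m
      = 2^J * (eps a s * a s * Qm a s) * (Sr a s J + Sr b s J) / 2 := by
    rw [hsplit a ha, hsplit b hb, hhead, hepseq s le_rfl, hQeq, hs]
    ring
  -- lower bound on Sr sum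
  have hr := rr_pos s
  have hr2 := rr_le_half s
  have hh : (0:ℝ) < (1/2:ℝ)^J := by positivity
  obtain ⟨_, hLa⟩ := Sr_bounds a ha J s
  obtain ⟨_, hLb⟩ := Sr_bounds b hb J s
  have hab2 : a s * a s = 1 := by rcases ha s with h | h <;> rw [h] <;> norm_num
  have hbs : b s = - a s := by rw [hs]; ring
  rw [hbs] at hLb
  have hh1 : ((1:ℝ)/2)^J ≤ 1 := by apply pow_le_one₀ <;> norm_num
  have hx : (1 + a s * rr s)^2 + (1 + -a s * rr s)^2 = 2 + 2*(rr s)^2 := by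
    linear_combination (2*(rr s)^2) * hab2
  have hcomb : (1 + (rr s)^2)*(1 - Sr a s J) + (1 + (rr s)^2)*(1 - Sr b s J)
      ≤ (2 + 2*(rr s)^2)*(1 - (1/2)^J*(1 - (rr s)^2)) := by
    calc (1 + (rr s)^2)*(1 - Sr a s J) + (1 + (rr s)^2)*(1 - Sr b s J)
        ≤ (1 + a s * rr s)^2 * (1 - (1/2)^J*(1 - (rr s)^2))
          + (1 + -a s * rr s)^2 * (1 - (1/2)^J*(1 - (rr s)^2)) := add_le_add hLa hLb
      _ = ((1 + a s * rr s)^2 + (1 + -a s * rr s)^2) * (1 - (1/2)^J*(1 - (rr s)^2)) := by ring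
      _ = (2 + 2*(rr s)^2)*(1 - (1/2)^J*(1 - (rr s)^2)) := by rw [hx]
  have hSsum : 2 * (1/2)^J * (1 - (rr s)^2) ≤ Sr a s J + Sr b s J := by
    nlinarith [hcomb, mul_pos hr hr, show (0:ℝ) < 1 + (rr s)^2 by positivity]
  have hSpos : 0 ≤ Sr a s J + Sr b s J := by
    have h1 : (0:ℝ) ≤ 2 * (1/2)^J * (1 - (rr s)^2) :=
      mul_nonneg (mul_nonneg (by norm_num) hh.le) (by nlinarith)
    linarith
  -- absolute value
  have habs : |eps a s * a s| = 1 := by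
    rcases eps_pm a ha s with h | h <;> rcases ha s with h' | h' <;>
      rw [h, h'] <;> norm_num
  have hQnn := Qm_nonneg a s
  have h2J : (0:ℝ) < 2^J := by positivity
  have hE : Tm a m - Tm b m
      = (eps a s * a s) * (2^J * Qm a s * (Sr a s J + Sr b s J) / 2) := by
    rw [hdiff]; ring
  have hEnn : (0:ℝ) ≤ 2^J * Qm a s * (Sr a s J + Sr b s J) / 2 :=
    div_nonneg (mul_nonneg (mul_nonneg h2J.le hQnn) hSpos) (by norm_num)
  rw [hE, abs_mul, habs, one_mul, abs_of_nonneg hEnn]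
  have h1 : 2^J * Qm a s * (2*(1/2)^J*(1-(rr s)^2)) ≤ 2^J * Qm a s * (Sr a s J + Sr b s J) :=
    mul_le_mul_of_nonneg_left hSsum (mul_nonneg h2J.le hQnn)
  have h2 : (2:ℝ)^J * Qm a s * (2*(1/2)^J*(1-(rr s)^2)) / 2 = Qm a s * (1-(rr s)^2) := by
    have hp : (2:ℝ)^J * (1/2)^J = 1 := by rw [← mul_pow]; norm_num
    calc (2:ℝ)^J * Qm a s * (2*(1/2)^J*(1-(rr s)^2)) / 2
        = ((2:ℝ)^J*(1/2)^J) * (Qm a s * (1-(rr s)^2)) := by ring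
      _ = Qm a s * (1-(rr s)^2) := by rw [hp]; ring
  linarith

noncomputable def PP (s : ℕ) : ℝ := ∏ i ∈ range s, (1 - rr i)

lemma rr_quarter (t : ℕ) (ht : 1 ≤ t) : rr t ≤ 1/4 := by
  have h1 : 2 ≤ 2^t := by
    calc 2 = 2^1 := (pow_one 2).symm
    _ ≤ 2^t := Nat.pow_le_pow_right (by norm_num) ht
  calc rr t ≤ ((1:ℝ)/2)^2 := pow_le_pow_of_le_one (by norm_num) (by norm_num) h1
    _ = 1/4 := by norm_num

lemma PP_pos (s : ℕ) : 0 < PP s := by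
  apply prod_pos; intro i _
  have := rr_le_half i; linarith

lemma PP_ge : ∀ s, 2 ≤ s → 15/43 * (1 + 2 * rr (s+1)) ≤ PP (s+1) := by
  intro s hs
  induction s, hs using Nat.le_induction with
  | base =>
    unfold PP
    rw [prod_range_succ, prod_range_succ, prod_range_succ, prod_range_zero]
    have h0 : rr 0 = 1/2 := by norm_num [rr]
    have h1 : rr 1 = 1/4 := by norm_num [rr]
    have h2 : rr 2 = 1/16 := by norm_num [rr]
    have h3 : rr 3 = 1/256 := by norm_num [rr]
    rw [h0, h1, h2, h3]; norm_num
  | succ s hs IH =>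
    unfold PP
    rw [prod_range_succ]
    have hx : rr (s+1) ≤ 1/4 := rr_quarter (s+1) (by omega)
    have hxp := rr_pos (s+1)
    have hrs : rr (s+2) = rr (s+1)^2 := rr_succ (s+1)
    have hPP : 15/43 * (1 + 2 * rr (s+1)) ≤ PP (s+1) := IH
    unfold PP at hPP
    have hfac : (0:ℝ) < 1 - rr (s+1) := by linarith
    calc 15/43 * (1 + 2 * rr (s+2))
        = 15/43 * (1 + 2 * rr (s+1)^2) := by rw [hrs]
      _ ≤ 15/43 * ((1 + 2 * rr (s+1)) * (1 - rr (s+1))) := by nlinarith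
      _ = (15/43 * (1 + 2 * rr (s+1))) * (1 - rr (s+1)) := by ring
      _ ≤ (∏ i ∈ range (s+1), (1 - rr i)) * (1 - rr (s+1)) := by
          apply mul_le_mul_of_nonneg_right hPP hfac.le

lemma Q_final (a : ℕ → ℝ) (ha : ∀ i, a i = 1 ∨ a i = -1) (s : ℕ) :
    (0.12:ℝ) ≤ Qm a s * (1 - (rr s)^2) := by
  have hQP : PP s ^ 2 ≤ Qm a s := by
    unfold Qm PP
    rw [← prod_pow]
    apply prod_le_prod
    · intro i _; exact sq_nonneg _
    · intro i hi
      have hr := rr_pos i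
      have hr2 := rr_le_half i
      rcases ha i with h | h <;> rw [h] <;> nlinarith
  have hstep : (PP s * (1 - rr s))^2 ≤ Qm a s * (1 - (rr s)^2) := by
    have hr := rr_pos s
    have hr2 := rr_le_half s
    have hPp := PP_pos s
    have h1 : (1 - rr s)^2 ≤ 1 - (rr s)^2 := by nlinarith
    calc (PP s * (1 - rr s))^2 = PP s ^2 * (1 - rr s)^2 := by ring
      _ ≤ Qm a s * (1 - (rr s)^2) := by
          apply mul_le_mul hQP h1 (by positivity) (Qm_nonneg a s)
  have hPs : (15:ℝ)/43 ≤ PP s * (1 - rr s) := by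
    have : PP s * (1 - rr s) = PP (s+1) := by
      unfold PP; rw [prod_range_succ]
    rw [this]
    match s with
    | 0 =>
      unfold PP
      rw [prod_range_succ, prod_range_zero]
      have h0 : rr 0 = 1/2 := by norm_num [rr]
      rw [h0]; norm_num
    | 1 =>
      unfold PP
      rw [prod_range_succ, prod_range_succ, prod_range_zero]
      have h0 : rr 0 = 1/2 := by norm_num [rr]
      have h1 : rr 1 = 1/4 := by norm_num [rr]
      rw [h0, h1]; norm_num
    | (n+2) =>
      have := PP_ge (n+2) (by omega)
      have hxp := rr_pos (n+3)
      nlinarith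
  calc (0.12:ℝ) ≤ ((15:ℝ)/43)^2 := by norm_num
    _ ≤ (PP s * (1 - rr s))^2 := by
        apply pow_le_pow_left₀ (by norm_num) hPs
    _ ≤ Qm a s * (1 - (rr s)^2) := hstep

noncomputable def au (m : ℕ) (u : Fin m → Bool) : ℕ → ℝ :=
  fun i => if h : i < m then (if u ⟨i, h⟩ then -1 else 1) else 1

lemma au_pm (m : ℕ) (u : Fin m → Bool) : ∀ i, au m u i = 1 ∨ au m u i = -1 := by
  intro i; unfold au
  split_ifs
  · right; rfl
  · left; rfl
  · left; rfl

lemma parity_wp (m : ℕ) (u : Fin m → Bool) (t : ℕ) :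
    wp (au m u) m t
      = if (univ.filter fun i : Fin m => u i = true ∧ t.testBit (i:ℕ) = true).card % 2 = 1
          then (-1:ℝ) else 1 := by
  have h1 : wp (au m u) m t
      = ∏ i : Fin m, (if (u i = true ∧ t.testBit (i:ℕ) = true) then (-1:ℝ) else 1) := by
    unfold wp
    rw [← Fin.prod_univ_eq_prod_range]
    apply prod_congr rfl
    intro i _
    unfold au
    rcases Bool.eq_false_or_eq_true (u i) with h | h <;>
      rcases Bool.eq_false_or_eq_true (t.testBit (i:ℕ)) with h' | h' <;>
      simp [h, h', i.isLt]
  rw [h1, ← prod_filter_mul_prod_filter_not univ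
    (fun i : Fin m => u i = true ∧ t.testBit (i:ℕ) = true)]
  rw [prod_congr rfl (fun i hi => if_pos (mem_filter.mp hi).2),
    prod_congr rfl (fun i hi => if_neg (mem_filter.mp hi).2), prod_const, prod_const,
    one_pow, mul_one]
  rcases Nat.even_or_odd ((univ.filter fun i : Fin m =>
      u i = true ∧ t.testBit (i:ℕ) = true).card) with h | h
  · rw [h.neg_one_pow, if_neg (by rw [Nat.even_iff] at h; omega)]
  · rw [h.neg_one_pow, if_pos (Nat.odd_iff.mp h)]

lemma pair_eq (u0 p q : Bool) (c : ℝ) :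
    (if (u0 ^^ p) = (u0 ^^ q) then c else 0)
      = c/2 + c/2 * (if p then (-1:ℝ) else 1) * (if q then (-1:ℝ) else 1) := by
  cases u0 <;> cases p <;> cases q <;> norm_num

lemma alphaC_eq (m : ℕ) (x : Fin (2^m) → Bool) (W : ℕ → ℝ)
    (hxW : ∀ i j : Fin (2^m), ∀ c : ℝ,
      (if x i = x j then c else 0) = c/2 + c/2 * W (i:ℕ) * W (j:ℕ)) :
    alphaC x = (∑ i ∈ range (2^m), ∑ j ∈ range (2^m),
        if i < j then ((1:ℝ)/2)^(j-i) else 0)/2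
      + (∑ i ∈ range (2^m), ∑ j ∈ range (2^m),
          if i < j then ((1:ℝ)/2)^(j-i) * W i * W j else 0)/2 := by
  have key : ∀ b : Bool,
      (∑ i ∈ univ.filter (fun i : Fin (2^m) => x i = b),
        ∑ j ∈ univ.filter (fun j : Fin (2^m) => x j = b ∧ i < j),
          ((1:ℝ)/2)^((j:ℕ)-(i:ℕ)))
      = ∑ i : Fin (2^m), ∑ j : Fin (2^m),
          if x i = b ∧ x j = b ∧ i < j then ((1:ℝ)/2)^((j:ℕ)-(i:ℕ)) else 0 := by
    intro b
    rw [sum_filter]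
    apply sum_congr rfl; intro i _
    by_cases h : x i = b
    · rw [if_pos h, sum_filter]
      apply sum_congr rfl; intro j _
      by_cases h2 : x j = b ∧ i < j
      · rw [if_pos h2, if_pos ⟨h, h2⟩]
      · rw [if_neg h2, if_neg (by tauto)]
    · rw [if_neg h]
      symm; apply sum_eq_zero; intro j _
      rw [if_neg (by tauto)]
  unfold alphaC
  rw [key false, key true, ← sum_add_distrib]
  have step1 : ∀ i : Fin (2^m), (∑ j : Fin (2^m),
        if x i = false ∧ x j = false ∧ i < j then ((1:ℝ)/2)^((j:ℕ)-(i:ℕ)) else 0)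
      + (∑ j : Fin (2^m),
        if x i = true ∧ x j = true ∧ i < j then ((1:ℝ)/2)^((j:ℕ)-(i:ℕ)) else 0)
      = ∑ j : Fin (2^m), ((if i < j then ((1:ℝ)/2)^((j:ℕ)-(i:ℕ)) else 0)/2
          + (if i < j then ((1:ℝ)/2)^((j:ℕ)-(i:ℕ)) * W (i:ℕ) * W (j:ℕ) else 0)/2) := by
    intro i
    rw [← sum_add_distrib]
    apply sum_congr rfl; intro j _
    by_cases hij : i < j
    · have hcomb : (if x i = false ∧ x j = false ∧ i < j then ((1:ℝ)/2)^((j:ℕ)-(i:ℕ)) else 0)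
          + (if x i = true ∧ x j = true ∧ i < j then ((1:ℝ)/2)^((j:ℕ)-(i:ℕ)) else 0)
          = (if x i = x j then ((1:ℝ)/2)^((j:ℕ)-(i:ℕ)) else 0) := by
        rcases Bool.eq_false_or_eq_true (x i) with h | h <;>
          rcases Bool.eq_false_or_eq_true (x j) with h' | h' <;>
          simp [h, h', hij]
      rw [hcomb, hxW i j, if_pos hij, if_pos hij]
      ring
    · rcases Bool.eq_false_or_eq_true (x i) with h | h <;>
        rcases Bool.eq_false_or_eq_true (x j) with h' | h' <;>
        simp [h, h', hij]
  rw [sum_congr rfl (fun i _ => step1 i)]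
  rw [sum_congr rfl (fun i (_ : i ∈ univ) => sum_add_distrib), sum_add_distrib]
  congr 1
  · simp only [← Finset.sum_div]
    congr 1
    rw [← Fin.sum_univ_eq_sum_range (fun i => ∑ j ∈ range (2^m),
      if i < j then ((1:ℝ)/2)^(j-i) else 0)]
    apply sum_congr rfl; intro i _
    rw [← Fin.sum_univ_eq_sum_range (fun j => if (i:ℕ) < j then ((1:ℝ)/2)^(j-(i:ℕ)) else 0)]
    apply sum_congr rfl; intro j _
    rfl
  · simp only [← Finset.sum_div]
    congr 1
    rw [← Fin.sum_univ_eq_sum_range (fun i => ∑ j ∈ range (2^m),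
      if i < j then ((1:ℝ)/2)^(j-i) * W i * W j else 0)]
    apply sum_congr rfl; intro i _
    rw [← Fin.sum_univ_eq_sum_range (fun j => if (i:ℕ) < j then ((1:ℝ)/2)^(j-(i:ℕ)) * W (i:ℕ) * W j else 0)]
    apply sum_congr rfl; intro j _
    rfl

lemma half_pow (i j : ℕ) (hij : i < j) : ((1:ℝ)/2)^(j-i) = 2^i * (1/2)^j := by
  calc ((1:ℝ)/2)^(j-i) = (2^i*(1/2)^i) * (1/2)^(j-i) := by
        rw [← mul_pow]; norm_num
    _ = 2^i * ((1/2)^i * (1/2)^(j-i)) := by ring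
    _ = 2^i * (1/2)^j := by rw [← pow_add, Nat.add_sub_cancel' (le_of_lt hij)]

lemma WTm (m : ℕ) (a : ℕ → ℝ) :
    (∑ i ∈ range (2^m), ∑ j ∈ range (2^m),
      if i < j then ((1:ℝ)/2)^(j-i) * wp a m i * wp a m j else 0) = Tm a m := by
  unfold Tm
  apply sum_congr rfl; intro i _
  apply sum_congr rfl; intro j _
  by_cases hij : i < j
  · rw [if_pos hij, if_pos hij, half_pow i j hij]
  · rw [if_neg hij, if_neg hij]

lemma master (m : ℕ) (u0 : Bool) (u : Fin m → Bool) (x : Fin (2^m) → Bool)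
    (hxd : ∀ t : Fin (2^m), x t = (u0 ^^ decide ((univ.filter fun i : Fin m =>
        u i = true ∧ (t:ℕ).testBit (i:ℕ) = true).card % 2 = 1))) :
    ∀ i j : Fin (2^m), ∀ c : ℝ, (if x i = x j then c else 0)
      = c/2 + c/2 * wp (au m u) m (i:ℕ) * wp (au m u) m (j:ℕ) := by
  intro i j c
  rw [hxd i, hxd j, pair_eq, parity_wp, parity_wp]
  simp only [decide_eq_true_eq]

lemma alpha_closed (m : ℕ) (u0 : Bool) (u : Fin m → Bool) (x : Fin (2^m) → Bool)
    (hxd : ∀ t : Fin (2^m), x t = (u0 ^^ decide ((univ.filter fun i : Fin m =>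
        u i = true ∧ (t:ℕ).testBit (i:ℕ) = true).card % 2 = 1))) :
    alphaC x = (∑ i ∈ range (2^m), ∑ j ∈ range (2^m),
        if i < j then ((1:ℝ)/2)^(j-i) else 0)/2 + Tm (au m u) m / 2 := by
  rw [alphaC_eq m x (wp (au m u) m) (master m u0 u x hxd), WTm]

end RMGap

open RMGap in
/-- Condition (C1): separation of the `α` coefficients of distinct `RM(m,1)`
codewords sharing the same first bit. -/
theorem RM1_alpha_gap (m : ℕ) (hm : 4 ≤ m) (x y : Fin (2 ^ m) → Bool)
    (hx : x ∈ RM1 m) (hy : y ∈ RM1 m) (hxy : x ≠ y)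
    (hfirst : x ⟨0, by positivity⟩ = y ⟨0, by positivity⟩) :
    0.06 - 3 * ∑ k ∈ Finset.Icc (16 : ℕ) (2 ^ m / 2), (k : ℝ) * ((1:ℝ)/2) ^ k ≤
      |alphaC x - alphaC y| := by
  classical
  obtain ⟨u0x, ux, hxd⟩ := hx
  obtain ⟨u0y, uy, hyd⟩ := hy
  have hax := au_pm m ux
  have hay := au_pm m uy
  have htail : (0:ℝ) ≤ 3 * ∑ k ∈ Finset.Icc (16:ℕ) (2^m/2), (k:ℝ)*((1:ℝ)/2)^k := by
    apply mul_nonneg (by norm_num)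
    apply sum_nonneg; intro k _; positivity
  suffices h : (0.06:ℝ) ≤ |alphaC x - alphaC y| by linarith
  have hdiff : alphaC x - alphaC y = (Tm (au m ux) m - Tm (au m uy) m)/2 := by
    rw [alpha_closed m u0x ux x hxd, alpha_closed m u0y uy y hyd]
    ring
  -- u0 equality
  have hu0 : u0x = u0y := by
    have h0x := hxd ⟨0, by positivity⟩
    have h0y := hyd ⟨0, by positivity⟩
    simp only [Fin.val_mk, Nat.zero_testBit, and_false, filter_false, card_empty,
      Nat.zero_mod, decide_eq_true_eq, Bool.xor_false] at h0x h0y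
    rw [h0x, h0y] at hfirst
    simpa using hfirst
  have huneq : ux ≠ uy := by
    intro he
    apply hxy
    funext t
    rw [hxd t, hyd t, he, hu0]
  have hexist : ∃ i, au m ux i ≠ au m uy i := by
    obtain ⟨i, hi⟩ := Function.ne_iff.mp huneq
    refine ⟨(i:ℕ), ?_⟩
    unfold au
    rw [dif_pos i.isLt, dif_pos i.isLt]
    simp only [Fin.eta]
    rcases Bool.eq_false_or_eq_true (ux i) with h1 | h1 <;>
      rcases Bool.eq_false_or_eq_true (uy i) with h2 | h2 <;>
      simp_all <;> norm_num
  set s := Nat.find hexist with hsdef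
  have hsspec : au m ux s ≠ au m uy s := Nat.find_spec hexist
  have hslt : s < m := by
    by_contra hge
    push_neg at hge
    apply hsspec
    unfold au
    rw [dif_neg (by omega), dif_neg (by omega)]
  have hlow : ∀ i, i < s → au m ux i = au m uy i := by
    intro i hi
    have := Nat.find_min hexist hi
    tauto
  have hsneg : au m ux s = - au m uy s := by
    rcases hax s with h1 | h1 <;> rcases hay s with h2 | h2 <;> rw [h1, h2] <;>
      rw [h1, h2] at hsspec <;> norm_num <;> norm_num at hsspec
  have hmain := Tm_diff (au m ux) (au m uy) hax hay s m hslt hlow hsneg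
  have hq := Q_final (au m ux) hax s
  have h12 : (0.12:ℝ) ≤ |Tm (au m ux) m - Tm (au m uy) m| := le_trans hq hmain
  rw [hdiff, abs_div]
  have h2 : |(2:ℝ)| = 2 := by norm_num
  rw [h2]
  linarith
end

section
/- Let m ≥ 4 and n = 2^m. For any pair of distinct codewords x, y ∈ RM(m,1) having the same first bit (x_1 = y_1), the coefficients satisfy |α_x − α_y| − |β_x − β_y| ≥ 0. -/
open Finset

namespace RMAux

/-- The suffix form `Φ_k` over `j` further sign positions. -/
noncomputable def PhiF (v D e : ℕ → ℝ) : ℕ → ℕ → ℝ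
  | _, 0 => 0
  | k, j+1 => e k * v k + (2 + e k * D k) * PhiF v D e (k+1) j

@[simp] lemma phiF_zero (v D e : ℕ → ℝ) (k : ℕ) : PhiF v D e k 0 = 0 := rfl

lemma phiF_succ (v D e : ℕ → ℝ) (k j : ℕ) :
    PhiF v D e k (j+1) = e k * v k + (2 + e k * D k) * PhiF v D e (k+1) j := rfl

lemma phiF_add (v w D e : ℕ → ℝ) : ∀ j k,
    PhiF (fun i => v i + w i) D e k j = PhiF v D e k j + PhiF w D e k j := by
  intro j
  induction j with
  | zero => intro k; simp
  | succ j ih => intro k; simp only [phiF_succ, ih]; ring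

lemma phiF_smul (a : ℝ) (v D e : ℕ → ℝ) : ∀ j k,
    PhiF (fun i => a * v i) D e k j = a * PhiF v D e k j := by
  intro j
  induction j with
  | zero => intro k; simp
  | succ j ih => intro k; simp only [phiF_succ, ih]; ring

lemma phiF_succ_right (v D e : ℕ → ℝ) : ∀ j k,
    PhiF v D e k (j+1) = PhiF v D e k j
      + e (k+j) * v (k+j) * ∏ i ∈ range j, (2 + e (k+i) * D (k+i)) := by
  intro j
  induction j with
  | zero => intro k; simp [phiF_succ]
  | succ j ih =>
    intro k
    rw [phiF_succ v D e k (j+1), phiF_succ v D e k j, ih (k+1)]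
    have h1 : ∀ i : ℕ, k + (i+1) = (k+1) + i := fun i => by omega
    rw [Finset.prod_range_succ' (fun i => (2 + e (k+i) * D (k+i))) j]
    simp only [Nat.add_zero, show k + 1 + j = k + (j+1) from by omega]
    have h2 : (∏ i ∈ range j, (2 + e (k+(i+1)) * D (k+(i+1))))
        = ∏ i ∈ range j, (2 + e ((k+1)+i) * D ((k+1)+i)) := by
      apply Finset.prod_congr rfl; intro i _; rw [h1 i]
    rw [h2]; ring

lemma phiF_bounds (v D U L : ℕ → ℝ) (m : ℕ)
    (hU : U m = 0) (hL : L m ≤ 0)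
    (h2 : ∀ k, k < m → v k + (2 + D k) * U (k+1) ≤ U k)
    (h3 : ∀ k, k < m → -v k + (2 - D k) * L (k+1) ≤ U k)
    (h4 : ∀ k, k < m → L k ≤ v k + (2 + D k) * L (k+1))
    (h5 : ∀ k, k < m → L k ≤ -v k + (2 - D k) * U (k+1))
    (hD : ∀ k, k < m → 2 ≤ D k) :
    ∀ j k, k + j = m → ∀ e : ℕ → ℝ, (∀ i, e i = 1 ∨ e i = -1) →
      L k ≤ PhiF v D e k j ∧ PhiF v D e k j ≤ U k := by
  intro j
  induction j with
  | zero =>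
    intro k hk e _
    have : k = m := by omega
    subst this
    simpa using ⟨hL, le_of_eq hU.symm⟩
  | succ j ih =>
    intro k hk e he
    have hkm : k < m := by omega
    obtain ⟨ihl, ihu⟩ := ih (k+1) (by omega) e he
    have hDk := hD k hkm
    rcases he k with h1 | h1 <;> rw [phiF_succ, h1] <;> constructor
    · nlinarith [h4 k hkm, mul_le_mul_of_nonneg_left ihl (by linarith : (0:ℝ) ≤ 2 + D k)]
    · nlinarith [h2 k hkm, mul_le_mul_of_nonneg_left ihu (by linarith : (0:ℝ) ≤ 2 + D k)]
    · nlinarith [h5 k hkm, mul_le_mul_of_nonpos_left ihu (by linarith : 2 - D k ≤ 0)]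
    · nlinarith [h3 k hkm, mul_le_mul_of_nonpos_left ihl (by linarith : 2 - D k ≤ 0)]

lemma phiF_sep (v D U L : ℕ → ℝ) (m : ℕ)
    (hU : U m = 0) (hL : L m ≤ 0)
    (h2 : ∀ k, k < m → v k + (2 + D k) * U (k+1) ≤ U k)
    (h3 : ∀ k, k < m → -v k + (2 - D k) * L (k+1) ≤ U k)
    (h4 : ∀ k, k < m → L k ≤ v k + (2 + D k) * L (k+1))
    (h5 : ∀ k, k < m → L k ≤ -v k + (2 - D k) * U (k+1))
    (h6 : ∀ k, k < m → 0 ≤ v k + D k * L (k+1))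
    (hD : ∀ k, k < m → 2 ≤ D k) :
    ∀ j k, k + (j+1) = m → ∀ e e' : ℕ → ℝ,
      (∀ i, e i = 1 ∨ e i = -1) → (∀ i, e' i = 1 ∨ e' i = -1) →
      e k = 1 → e' k = -1 →
      PhiF v D e' k (j+1) ≤ PhiF v D e k (j+1) := by
  intro j k hk e e' he he' hek he'k
  have hkm : k < m := by omega
  have B := phiF_bounds v D U L m hU hL h2 h3 h4 h5 hD j (k+1) (by omega)
  obtain ⟨bl, _⟩ := B e he
  obtain ⟨bl', _⟩ := B e' he'
  rw [phiF_succ, phiF_succ, hek, he'k]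
  have hDk := hD k hkm
  nlinarith [h6 k hkm,
    mul_le_mul_of_nonneg_left bl (by linarith : (0:ℝ) ≤ 2 + D k),
    mul_le_mul_of_nonpos_left bl' (by linarith : 2 - D k ≤ 0)]

lemma phiF_prefix (v D e e' : ℕ → ℝ) : ∀ t k j,
    (∀ i, k ≤ i → i < k + t → e i = e' i) →
    PhiF v D e k (t + j) - PhiF v D e' k (t + j)
      = (∏ i ∈ range t, (2 + e (k+i) * D (k+i)))
        * (PhiF v D e (k+t) j - PhiF v D e' (k+t) j) := by
  intro t
  induction t with
  | zero => intro k j _; simp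
  | succ t ih =>
    intro k j hagree
    have hek : e k = e' k := hagree k le_rfl (by omega)
    have h1 : t + 1 + j = (t + j) + 1 := by omega
    rw [h1, phiF_succ, phiF_succ, ← hek]
    have ih' := ih (k+1) j (fun i h1 h2 => hagree i (by omega) (by omega))
    rw [Finset.prod_range_succ' (fun i => (2 + e (k+i) * D (k+i))) t]
    simp only [Nat.add_zero]
    have h2 : (∏ i ∈ range t, (2 + e (k+(i+1)) * D (k+(i+1))))
        = ∏ i ∈ range t, (2 + e ((k+1)+i) * D ((k+1)+i)) := by
      apply Finset.prod_congr rfl; intro i _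
      rw [show k+(i+1) = k+1+i from by omega]
    have h3 : k + (t+1) = (k+1) + t := by omega
    rw [h2, h3]
    linear_combination (2 + e k * D k) * ih'


noncomputable def xk (k : ℕ) : ℝ := 2 ^ (2 ^ k)
noncomputable def Kc (m k : ℕ) : ℝ := 2 ^ m / 2 ^ k
noncomputable def DD (k : ℕ) : ℝ := xk k + (xk k)⁻¹
noncomputable def vp (m k : ℕ) : ℝ := Kc m k / 2 * (xk m / xk k + xk k)
noncomputable def vm (m k : ℕ) : ℝ := Kc m k / 2 * (xk m / xk k - xk k)
noncomputable def Up (m k : ℕ) : ℝ := Kc m k * (xk m - xk k) / (xk k - 1)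
noncomputable def Lp (m k : ℕ) : ℝ := -(Kc m k * (xk m + xk k) / (xk k + 1))
noncomputable def Um (m k : ℕ) : ℝ :=
  (Kc m k * (xk k - 1) * (xk m + xk k) - 2 * xk k * (xk m - 1)) / (xk k - 1)^2
noncomputable def Lm (m k : ℕ) : ℝ :=
  if k = m then 0 else
  -((Kc m k * (xk k + 1) * (xk m - xk k) - 2 * xk k * (xk m - 1)) / (xk k + 1)^2)

lemma xk_ge_two (k : ℕ) : 2 ≤ xk k := by
  rw [xk]
  calc (2:ℝ) = 2^1 := (pow_one 2).symm
  _ ≤ 2^(2^k) := pow_le_pow_right₀ one_le_two Nat.one_le_two_pow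

lemma xk_pos (k : ℕ) : 0 < xk k := lt_of_lt_of_le two_pos (xk_ge_two k)

lemma xk_succ (k : ℕ) : xk (k+1) = xk k ^ 2 := by
  rw [xk, xk, ← pow_mul, pow_succ]

lemma xk_mono {k l : ℕ} (h : k ≤ l) : xk k ≤ xk l := by
  apply pow_le_pow_right₀ one_le_two (Nat.pow_le_pow_right (by norm_num) h)

lemma Kc_pos (m k : ℕ) : 0 < Kc m k := by
  apply div_pos <;> positivity

lemma Kc_succ (m k : ℕ) : Kc m (k+1) = Kc m k / 2 := by
  rw [Kc, Kc, pow_succ]; ring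

lemma Kc_self (m : ℕ) : Kc m m = 1 := by
  rw [Kc, div_self (by positivity)]

lemma Kc_ge_two {m k : ℕ} (h : k < m) : 2 ≤ Kc m k := by
  rw [Kc, le_div_iff₀ (by positivity)]
  calc (2:ℝ) * 2^k = 2^(k+1) := by ring
  _ ≤ 2^m := by apply pow_le_pow_right₀ one_le_two (by omega)

lemma Kc_ge_four {m k : ℕ} (h : k + 2 ≤ m) : 4 ≤ Kc m k := by
  rw [Kc, le_div_iff₀ (by positivity)]
  calc (4:ℝ) * 2^k = 2^(k+2) := by ring
  _ ≤ 2^m := by apply pow_le_pow_right₀ one_le_two (by omega)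

section Algebra
variable {x X K : ℝ}

/-- facts bundle -/
lemma xfacts (hx : 2 ≤ x) : 0 < x ∧ 0 < x - 1 ∧ 0 < x + 1 ∧ 0 < x^2 - 1 ∧ 0 < x^2+1 := by
  refine ⟨by linarith, by linarith, by linarith, by nlinarith, by nlinarith⟩

lemma alg_plus_H2 (hx : 2 ≤ x) :
    K/2 * (X/x + x) + (2 + (x + x⁻¹)) * (K/2 * (X - x^2) / (x^2 - 1)) = K * (X - x) / (x - 1) := by
  obtain ⟨h0, h1, h2, h3, h4⟩ := xfacts hx
  field_simp
  ring

lemma alg_plus_H5 (hx : 2 ≤ x) :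
    -(K/2 * (X/x + x)) + (2 - (x + x⁻¹)) * (K/2 * (X - x^2) / (x^2 - 1))
      = -(K * (X + x) / (x + 1)) := by
  obtain ⟨h0, h1, h2, h3, h4⟩ := xfacts hx
  field_simp
  ring

lemma alg_plus_H3 (hx : 2 ≤ x) (hK : 0 < K) (hXx : x ≤ X) :
    -(K/2 * (X/x + x)) + (2 - (x + x⁻¹)) * (-(K/2 * (X + x^2) / (x^2 + 1)))
      ≤ K * (X - x) / (x - 1) := by
  obtain ⟨h0, h1, h2, h3, h4⟩ := xfacts hx
  have hid : -(K/2 * (X/x + x)) + (2 - (x + x⁻¹)) * (-(K/2 * (X + x^2) / (x^2 + 1)))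
      = -(K * (X + x^2) / (x^2+1)) := by field_simp; ring
  rw [hid]
  have hl : -(K * (X + x^2) / (x^2+1)) ≤ 0 := by
    apply neg_nonpos_of_nonneg
    apply div_nonneg (by nlinarith) (by linarith)
  have hr : 0 ≤ K * (X - x) / (x - 1) := by
    apply div_nonneg (by nlinarith) (by linarith)
  linarith

lemma alg_plus_H4 (hx : 2 ≤ x) (hK : 0 < K) (hX1 : 1 ≤ X) :
    -(K * (X + x) / (x + 1)) ≤ K/2 * (X/x + x) + (2 + (x + x⁻¹)) * (-(K/2 * (X + x^2) / (x^2 + 1))) := by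
  obtain ⟨h0, h1, h2, h3, h4⟩ := xfacts hx
  have hid : K/2 * (X/x + x) + (2 + (x + x⁻¹)) * (-(K/2 * (X + x^2) / (x^2 + 1)))
      = -(K * (X + x^2) / (x^2+1)) := by field_simp; ring
  rw [hid, neg_le_neg_iff, div_le_div_iff₀ h4 h2]
  nlinarith [mul_nonneg (mul_nonneg (mul_nonneg hK.le h0.le) h1.le) (sub_nonneg.mpr hX1)]

lemma alg_plus_H6 (hx : 2 ≤ x) :
    K/2 * (X/x + x) + (x + x⁻¹) * (-(K/2 * (X + x^2) / (x^2 + 1))) = 0 := by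
  obtain ⟨h0, h1, h2, h3, h4⟩ := xfacts hx
  field_simp
  ring

lemma alg_minus_H2 (hx : 2 ≤ x) :
    K/2 * (X/x - x) + (2 + (x + x⁻¹)) *
      ((K/2 * (x^2 - 1) * (X + x^2) - 2 * x^2 * (X - 1)) / (x^2 - 1)^2)
    = (K * (x - 1) * (X + x) - 2 * x * (X - 1)) / (x - 1)^2 := by
  obtain ⟨h0, h1, h2, h3, h4⟩ := xfacts hx
  field_simp
  ring

lemma alg_minus_H5 (hx : 2 ≤ x) :
    -(K/2 * (X/x - x)) + (2 - (x + x⁻¹)) *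
      ((K/2 * (x^2 - 1) * (X + x^2) - 2 * x^2 * (X - 1)) / (x^2 - 1)^2)
    = -((K * (x + 1) * (X - x) - 2 * x * (X - 1)) / (x + 1)^2) := by
  obtain ⟨h0, h1, h2, h3, h4⟩ := xfacts hx
  field_simp
  ring

lemma alg_minus_Um_nonneg (hx : 2 ≤ x) (hK : 4 ≤ K) (hX : x^2 ≤ X) (hX1 : 1 ≤ X) :
    0 ≤ (K * (x - 1) * (X + x) - 2 * x * (X - 1)) / (x - 1)^2 := by
  obtain ⟨h0, h1, h2, h3, h4⟩ := xfacts hx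
  apply div_nonneg _ (by positivity)
  nlinarith [mul_nonneg (sub_nonneg.mpr hK) (mul_nonneg h1.le (by nlinarith : (0:ℝ) ≤ X + x))]

lemma alg_minus_H3 (hx : 2 ≤ x) (hK : 4 ≤ K) (hX : x^2 ≤ X) (hX1 : 1 ≤ X) :
    -(K/2 * (X/x - x)) + (2 - (x + x⁻¹)) *
      (-((K/2 * (x^2 + 1) * (X - x^2) - 2 * x^2 * (X - 1)) / (x^2 + 1)^2))
    ≤ (K * (x - 1) * (X + x) - 2 * x * (X - 1)) / (x - 1)^2 := by
  obtain ⟨h0, h1, h2, h3, h4⟩ := xfacts hx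
  have hid : -(K/2 * (X/x - x)) + (2 - (x + x⁻¹)) *
      (-((K/2 * (x^2 + 1) * (X - x^2) - 2 * x^2 * (X - 1)) / (x^2 + 1)^2))
      = -((K * (X - x^2) * (x^2+1) + 2 * x * (x-1)^2 * (X-1)) / (x^2+1)^2) := by
    field_simp
    ring
  rw [hid]
  have hl : -((K * (X - x^2) * (x^2+1) + 2 * x * (x-1)^2 * (X-1)) / (x^2+1)^2) ≤ 0 := by
    apply neg_nonpos_of_nonneg
    apply div_nonneg _ (by positivity)
    have t1 : 0 ≤ K * (X - x^2) * (x^2+1) := by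
      apply mul_nonneg (mul_nonneg (by linarith) (by linarith)) (by linarith)
    have t2 : 0 ≤ 2 * x * (x-1)^2 * (X-1) :=
      mul_nonneg (by positivity) (by linarith)
    linarith
  linarith [alg_minus_Um_nonneg hx hK hX hX1]

lemma alg_minus_H4 (hx : 2 ≤ x) (hK : 0 ≤ K) (hX1 : 1 ≤ X) :
    -((K * (x + 1) * (X - x) - 2 * x * (X - 1)) / (x + 1)^2)
    ≤ K/2 * (X/x - x) + (2 + (x + x⁻¹)) *
      (-((K/2 * (x^2 + 1) * (X - x^2) - 2 * x^2 * (X - 1)) / (x^2 + 1)^2)) := by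
  obtain ⟨h0, h1, h2, h3, h4⟩ := xfacts hx
  rw [← sub_nonneg]
  have hid : K/2 * (X/x - x) + (2 + (x + x⁻¹)) *
      (-((K/2 * (x^2 + 1) * (X - x^2) - 2 * x^2 * (X - 1)) / (x^2 + 1)^2))
      - (-((K * (x + 1) * (X - x) - 2 * x * (X - 1)) / (x + 1)^2))
      = (2*K*x^3*(X+1)*(x^4-1) + 16*x^4*(X-1)*(x^2+x+1))
          / (2*x^2*(x+1)^2*(x^2+1)^2) := by
    field_simp
    ring
  rw [hid]
  apply div_nonneg _ (by positivity)
  have t1 : 0 ≤ 2*K*x^3*(X+1)*(x^4-1) := by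
    have : (0:ℝ) < x^4 - 1 := by nlinarith
    have : (0:ℝ) < X + 1 := by linarith
    positivity
  have t2 : 0 ≤ 16*x^4*(X-1)*(x^2+x+1) := by
    apply mul_nonneg (mul_nonneg (by positivity) (by linarith)) (by positivity)
  linarith

lemma alg_minus_H6 (hx : 2 ≤ x) (hK : 0 ≤ K) (hX1 : 1 ≤ X) :
    0 ≤ K/2 * (X/x - x) + (x + x⁻¹) *
      (-((K/2 * (x^2 + 1) * (X - x^2) - 2 * x^2 * (X - 1)) / (x^2 + 1)^2)) := by
  obtain ⟨h0, h1, h2, h3, h4⟩ := xfacts hx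
  have hid : K/2 * (X/x - x) + (x + x⁻¹) *
      (-((K/2 * (x^2 + 1) * (X - x^2) - 2 * x^2 * (X - 1)) / (x^2 + 1)^2))
      = 2 * x * (X - 1) / (x^2+1) := by
    field_simp
    ring
  rw [hid]
  apply div_nonneg (by nlinarith) (by linarith)

end Algebra

section Inst
variable (m : ℕ)

lemma DD_ge_two (k : ℕ) : 2 ≤ DD k := by
  have h := xk_ge_two k
  have h2 : 0 < (xk k)⁻¹ := inv_pos.mpr (xk_pos k)
  rw [DD]; linarith

lemma xk_ge_one (k : ℕ) : 1 ≤ xk k := le_trans one_le_two (xk_ge_two k)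

lemma xk_sq_le {k : ℕ} (h : k < m) : xk k ^ 2 ≤ xk m := by
  rw [← xk_succ]; exact xk_mono (by omega)

lemma Kc_top {k : ℕ} (h : k + 1 = m) : Kc m k = 2 := by
  rw [Kc, ← h, pow_succ]
  field_simp

-- base values
lemma Up_base : Up m m = 0 := by rw [Up, sub_self, mul_zero, zero_div]

lemma Lp_base : Lp m m ≤ 0 := by
  rw [Lp]
  apply neg_nonpos_of_nonneg
  apply div_nonneg _ (by linarith [xk_ge_two m])
  apply mul_nonneg (Kc_pos m m).le (by linarith [xk_ge_two m, xk_ge_two m])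

lemma Um_base : Um m m = 0 := by
  rw [Um, Kc_self]
  have : (1:ℝ) * (xk m - 1) * (xk m + xk m) - 2 * xk m * (xk m - 1) = 0 := by ring
  rw [this, zero_div]

lemma Lm_base : Lm m m = 0 := if_pos rfl

lemma vm_top {k : ℕ} (h : k + 1 = m) : vm m k = 0 := by
  have hx : xk m = xk k ^ 2 := by rw [← h, xk_succ]
  rw [vm, hx]
  have h0 : xk k ≠ 0 := (xk_pos k).ne'
  field_simp
  ring

lemma Um_top {k : ℕ} (h : k + 1 = m) : Um m k = 0 := by
  have hx : xk m = xk k ^ 2 := by rw [← h, xk_succ]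
  rw [Um, hx, Kc_top m h]
  have : 2 * (xk k - 1) * (xk k ^ 2 + xk k) - 2 * xk k * (xk k ^ 2 - 1) = 0 := by ring
  rw [this, zero_div]

lemma Lm_top {k : ℕ} (h : k + 1 = m) : Lm m k = 0 := by
  have hx : xk m = xk k ^ 2 := by rw [← h, xk_succ]
  rw [Lm, if_neg (by omega), hx, Kc_top m h]
  have : 2 * (xk k + 1) * (xk k ^ 2 - xk k) - 2 * xk k * (xk k ^ 2 - 1) = 0 := by ring
  rw [this, zero_div, neg_zero]

-- plus hypotheses
lemma plus_h2 {k : ℕ} (hk : k < m) : vp m k + (2 + DD k) * Up m (k+1) ≤ Up m k := by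
  rw [vp, DD, Up, Up, Kc_succ, xk_succ]
  exact le_of_eq (alg_plus_H2 (xk_ge_two k))

lemma plus_h3 {k : ℕ} (hk : k < m) : -vp m k + (2 - DD k) * Lp m (k+1) ≤ Up m k := by
  rw [vp, DD, Lp, Up, Kc_succ, xk_succ]
  exact alg_plus_H3 (xk_ge_two k) (Kc_pos m k) (xk_mono hk.le)

lemma plus_h4 {k : ℕ} (hk : k < m) : Lp m k ≤ vp m k + (2 + DD k) * Lp m (k+1) := by
  rw [vp, DD, Lp, Lp, Kc_succ, xk_succ]
  exact alg_plus_H4 (xk_ge_two k) (Kc_pos m k) (xk_ge_one m)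

lemma plus_h5 {k : ℕ} (hk : k < m) : Lp m k ≤ -vp m k + (2 - DD k) * Up m (k+1) := by
  rw [vp, DD, Lp, Up, Kc_succ, xk_succ]
  exact le_of_eq (alg_plus_H5 (xk_ge_two k)).symm

lemma plus_h6 {k : ℕ} (hk : k < m) : 0 ≤ vp m k + DD k * Lp m (k+1) := by
  rw [vp, DD, Lp, Kc_succ, xk_succ]
  exact le_of_eq (alg_plus_H6 (xk_ge_two k)).symm

-- minus hypotheses
lemma minus_h2 {k : ℕ} (hk : k < m) : vm m k + (2 + DD k) * Um m (k+1) ≤ Um m k := by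
  by_cases h : k + 1 = m
  · rw [vm_top m h, h, Um_base, Um_top m h]; simp
  · rw [vm, DD, Um, Um, Kc_succ, xk_succ]
    exact le_of_eq (alg_minus_H2 (xk_ge_two k))

lemma minus_h3 {k : ℕ} (hk : k < m) : -vm m k + (2 - DD k) * Lm m (k+1) ≤ Um m k := by
  by_cases h : k + 1 = m
  · rw [vm_top m h, h, Lm_base, Um_top m h]; simp
  · rw [vm, DD, Um, Lm, if_neg (by omega), Kc_succ, xk_succ]
    exact alg_minus_H3 (xk_ge_two k) (Kc_ge_four (by omega)) (xk_sq_le m hk) (xk_ge_one m)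

lemma minus_h4 {k : ℕ} (hk : k < m) : Lm m k ≤ vm m k + (2 + DD k) * Lm m (k+1) := by
  by_cases h : k + 1 = m
  · rw [vm_top m h, h, Lm_base, Lm_top m h]; simp
  · rw [vm, DD, Lm, if_neg (by omega), Lm, if_neg (by omega), Kc_succ, xk_succ]
    exact alg_minus_H4 (xk_ge_two k) (Kc_pos m k).le (xk_ge_one m)

lemma minus_h5 {k : ℕ} (hk : k < m) : Lm m k ≤ -vm m k + (2 - DD k) * Um m (k+1) := by
  by_cases h : k + 1 = m
  · rw [vm_top m h, h, Um_base, Lm_top m h]; simp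
  · rw [vm, DD, Lm, if_neg (by omega), Um, Kc_succ, xk_succ]
    exact le_of_eq (alg_minus_H5 (xk_ge_two k)).symm

lemma minus_h6 {k : ℕ} (hk : k < m) : 0 ≤ vm m k + DD k * Lm m (k+1) := by
  by_cases h : k + 1 = m
  · rw [vm_top m h, h, Lm_base]; simp
  · rw [vm, DD, Lm, if_neg (by omega), Kc_succ, xk_succ]
    exact alg_minus_H6 (xk_ge_two k) (Kc_pos m k).le (xk_ge_one m)

/-- The key sign-product inequality. -/
lemma key_product (e e' : ℕ → ℝ)
    (he : ∀ i, e i = 1 ∨ e i = -1) (he' : ∀ i, e' i = 1 ∨ e' i = -1)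
    (k0 : ℕ) (hk0 : k0 < m) (hek : e k0 = 1) (he'k : e' k0 = -1)
    (hpre : ∀ j, j < k0 → e j = e' j) :
    0 ≤ (PhiF (vp m) DD e 0 m - PhiF (vp m) DD e' 0 m)
        * (PhiF (vm m) DD e 0 m - PhiF (vm m) DD e' 0 m) := by
  set j := m - k0 - 1 with hj
  have hm : m = k0 + (j + 1) := by omega
  have hpre' : ∀ i, 0 ≤ i → i < 0 + k0 → e i = e' i := fun i _ h2 => hpre i (by omega)
  have Pp := phiF_prefix (vp m) DD e e' k0 0 (j+1) hpre'
  have Pm := phiF_prefix (vm m) DD e e' k0 0 (j+1) hpre'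
  have sepp := phiF_sep (vp m) DD (Up m) (Lp m) m (Up_base m) (Lp_base m)
    (fun k hk => plus_h2 m hk) (fun k hk => plus_h3 m hk)
    (fun k hk => plus_h4 m hk) (fun k hk => plus_h5 m hk)
    (fun k hk => plus_h6 m hk) (fun k hk => DD_ge_two k)
    j k0 (by omega) e e' he he' hek he'k
  have sepm := phiF_sep (vm m) DD (Um m) (Lm m) m (Um_base m) (le_of_eq (Lm_base m))
    (fun k hk => minus_h2 m hk) (fun k hk => minus_h3 m hk)
    (fun k hk => minus_h4 m hk) (fun k hk => minus_h5 m hk)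
    (fun k hk => minus_h6 m hk) (fun k hk => DD_ge_two k)
    j k0 (by omega) e e' he he' hek he'k
  have h0t : (0:ℕ) + k0 = k0 := by omega
  rw [h0t] at Pp Pm
  rw [← hm] at Pp Pm
  rw [Pp, Pm]
  have hQ : (∏ i ∈ range k0, (2 + e (0+i) * DD (0+i)))
      * (PhiF (vp m) DD e k0 (j+1) - PhiF (vp m) DD e' k0 (j+1))
      * ((∏ i ∈ range k0, (2 + e (0+i) * DD (0+i)))
        * (PhiF (vm m) DD e k0 (j+1) - PhiF (vm m) DD e' k0 (j+1)))
      = (∏ i ∈ range k0, (2 + e (0+i) * DD (0+i)))^2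
        * ((PhiF (vp m) DD e k0 (j+1) - PhiF (vp m) DD e' k0 (j+1))
          * (PhiF (vm m) DD e k0 (j+1) - PhiF (vm m) DD e' k0 (j+1))) := by ring
  rw [hQ]
  apply mul_nonneg (sq_nonneg _)
  apply mul_nonneg (sub_nonneg.mpr sepp) (sub_nonneg.mpr sepm)

end Inst

section Comb

def epsR (u : ℕ → Bool) (k : ℕ) : ℝ := if u k then -1 else 1

lemma epsR_pm (u : ℕ → Bool) (k : ℕ) : epsR u k = 1 ∨ epsR u k = -1 := by
  rw [epsR]; by_cases h : u k <;> simp [h]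

lemma epsR_sq (u : ℕ → Bool) (k : ℕ) : epsR u k * epsR u k = 1 := by
  rw [epsR]; by_cases h : u k <;> simp [h]

noncomputable def eeR (u : ℕ → Bool) (m i : ℕ) : ℝ :=
  ∏ k ∈ range m, (if u k ∧ i.testBit k then (-1:ℝ) else 1)

noncomputable def Pw (u : ℕ → Bool) (m : ℕ) (w : ℝ) : ℝ :=
  ∑ i ∈ range (2^m), eeR u m i * w ^ i

noncomputable def Hw (u : ℕ → Bool) (m : ℕ) (w : ℝ) : ℝ :=
  ∑ i ∈ range (2^m), ∑ j ∈ range (2^m),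
    if i < j then eeR u m i * eeR u m j * w ^ (j - i) else 0

lemma eeR_low (u : ℕ → Bool) (m i : ℕ) (hi : i < 2^m) :
    eeR u (m+1) i = eeR u m i := by
  rw [eeR, prod_range_succ, eeR]
  rw [Nat.testBit_lt_two_pow hi]
  simp

lemma eeR_high (u : ℕ → Bool) (m i : ℕ) (hi : i < 2^m) :
    eeR u (m+1) (2^m + i) = epsR u m * eeR u m i := by
  rw [eeR, prod_range_succ, eeR]
  have h1 : (2^m + i).testBit m = true := by
    rw [Nat.testBit_two_pow_add_eq, Nat.testBit_lt_two_pow hi]; rfl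
  have h2 : (∏ k ∈ range m, (if u k ∧ (2^m + i).testBit k then (-1:ℝ) else 1))
      = ∏ k ∈ range m, (if u k ∧ i.testBit k then (-1:ℝ) else 1) := by
    apply Finset.prod_congr rfl
    intro k hk
    rw [Nat.testBit_two_pow_add_gt (mem_range.mp hk)]
  rw [h1, h2, mul_comm]
  congr 1
  rw [epsR]
  by_cases h : u m <;> simp [h]

lemma pow_split (m : ℕ) : 2^(m+1) = 2^m + 2^m := by rw [pow_succ]; omega

lemma Pw_succ (u : ℕ → Bool) (m : ℕ) (w : ℝ) :
    Pw u (m+1) w = (1 + epsR u m * w^(2^m)) * Pw u m w := by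
  rw [Pw, pow_split, Finset.sum_range_add]
  have hA : (∑ i ∈ range (2^m), eeR u (m+1) i * w ^ i) = Pw u m w := by
    apply Finset.sum_congr rfl
    intro i hi
    rw [eeR_low u m i (mem_range.mp hi)]
  have hB : (∑ i ∈ range (2^m), eeR u (m+1) (2^m + i) * w ^ (2^m + i))
      = epsR u m * w^(2^m) * Pw u m w := by
    rw [Pw, Finset.mul_sum]
    apply Finset.sum_congr rfl
    intro i hi
    rw [eeR_high u m i (mem_range.mp hi), pow_add]
    ring
  rw [hA, hB]
  ring

lemma PP_prod (u : ℕ → Bool) (w : ℝ) (hw : w ≠ 0) : ∀ m : ℕ,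
    Pw u m w * Pw u m w⁻¹
      = ∏ k ∈ range m, (2 + epsR u k * (w^(2^k) + w⁻¹^(2^k))) := by
  intro m
  induction m with
  | zero => simp [Pw, eeR]
  | succ m ih =>
    rw [Pw_succ, Pw_succ, prod_range_succ, ← ih]
    have hab : w^(2^m) * w⁻¹^(2^m) = 1 := by
      rw [inv_pow, mul_inv_cancel₀ (pow_ne_zero _ hw)]
    have hee := epsR_sq u m
    set P := Pw u m w
    set P' := Pw u m w⁻¹
    set a := w^(2^m)
    set b := w⁻¹^(2^m)
    set e := epsR u m
    linear_combination (P * P' * e * e) * hab + (P * P') * hee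

end Comb

section HwRec

lemma Hw_succ (u : ℕ → Bool) (m : ℕ) (w : ℝ) (hw : w ≠ 0) :
    Hw u (m+1) w = 2 * Hw u m w
      + epsR u m * w^(2^m) * (Pw u m w * Pw u m w⁻¹) := by
  have hsplit := pow_split m
  rw [Hw, hsplit, Finset.sum_range_add]
  have hin : ∀ i : ℕ,
      (∑ j ∈ range (2^m + 2^m), if i < j then eeR u (m+1) i * eeR u (m+1) j * w ^ (j - i) else 0)
      = (∑ j ∈ range (2^m), if i < j then eeR u (m+1) i * eeR u (m+1) j * w ^ (j - i) else 0)
        + ∑ j ∈ range (2^m), if i < 2^m + j then eeR u (m+1) i * eeR u (m+1) (2^m + j) * w ^ ((2^m + j) - i) else 0 := by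
    intro i
    exact Finset.sum_range_add (fun j => if i < j then eeR u (m+1) i * eeR u (m+1) j * w ^ (j - i) else 0) (2^m) (2^m)
  simp only [hin]
  rw [Finset.sum_add_distrib, Finset.sum_add_distrib]
  have hT1 : (∑ i ∈ range (2^m), ∑ j ∈ range (2^m),
      if i < j then eeR u (m+1) i * eeR u (m+1) j * w ^ (j - i) else 0) = Hw u m w := by
    rw [Hw]
    refine Finset.sum_congr rfl fun i hi => Finset.sum_congr rfl fun j hj => ?_
    by_cases h : i < j
    · rw [if_pos h, if_pos h, eeR_low u m i (mem_range.mp hi), eeR_low u m j (mem_range.mp hj)]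
    · rw [if_neg h, if_neg h]
  have hT3 : (∑ i ∈ range (2^m), ∑ j ∈ range (2^m),
      if 2^m + i < j then eeR u (m+1) (2^m+i) * eeR u (m+1) j * w ^ (j - (2^m+i)) else 0) = 0 := by
    refine Finset.sum_eq_zero fun i _ => Finset.sum_eq_zero fun j hj => ?_
    have := mem_range.mp hj
    rw [if_neg (by omega)]
  have hT4 : (∑ i ∈ range (2^m), ∑ j ∈ range (2^m),
      if 2^m + i < 2^m + j then eeR u (m+1) (2^m+i) * eeR u (m+1) (2^m+j) * w ^ ((2^m+j) - (2^m+i)) else 0)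
      = Hw u m w := by
    rw [Hw]
    refine Finset.sum_congr rfl fun i hi => Finset.sum_congr rfl fun j hj => ?_
    have hij : (2^m + i < 2^m + j) ↔ (i < j) := by omega
    by_cases h : i < j
    · rw [if_pos (hij.mpr h), if_pos h, eeR_high u m i (mem_range.mp hi),
        eeR_high u m j (mem_range.mp hj), Nat.add_sub_add_left]
      have hee := epsR_sq u m
      set a := eeR u m i; set b := eeR u m j; set e := epsR u m
      linear_combination (a * b * w ^ (j-i)) * hee
    · rw [if_neg (fun hc => h (hij.mp hc)), if_neg h]
  have hT2 : (∑ i ∈ range (2^m), ∑ j ∈ range (2^m),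
      if i < 2^m + j then eeR u (m+1) i * eeR u (m+1) (2^m+j) * w ^ ((2^m+j) - i) else 0)
      = epsR u m * w^(2^m) * (Pw u m w⁻¹ * Pw u m w) := by
    have step : ∀ i ∈ range (2^m), ∀ j ∈ range (2^m),
        (if i < 2^m + j then eeR u (m+1) i * eeR u (m+1) (2^m+j) * w ^ ((2^m+j) - i) else 0)
        = (epsR u m * w^(2^m)) * ((eeR u m i * w⁻¹^i) * (eeR u m j * w^j)) := by
      intro i hi j hj
      have hi' := mem_range.mp hi
      rw [if_pos (by omega)]
      rw [eeR_low u m i hi', eeR_high u m j (mem_range.mp hj)]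
      rw [pow_sub₀ w hw (by omega : i ≤ 2^m + j), pow_add, inv_pow]
      ring
    calc (∑ i ∈ range (2^m), ∑ j ∈ range (2^m),
        if i < 2^m + j then eeR u (m+1) i * eeR u (m+1) (2^m+j) * w ^ ((2^m+j) - i) else 0)
        = ∑ i ∈ range (2^m), ∑ j ∈ range (2^m),
            (epsR u m * w^(2^m)) * ((eeR u m i * w⁻¹^i) * (eeR u m j * w^j)) := by
          refine Finset.sum_congr rfl fun i hi => Finset.sum_congr rfl fun j hj => step i hi j hj
      _ = (epsR u m * w^(2^m)) * ∑ i ∈ range (2^m), ∑ j ∈ range (2^m),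
            ((eeR u m i * w⁻¹^i) * (eeR u m j * w^j)) := by
          simp only [← Finset.mul_sum]
      _ = (epsR u m * w^(2^m)) * ((∑ i ∈ range (2^m), eeR u m i * w⁻¹^i)
            * (∑ j ∈ range (2^m), eeR u m j * w^j)) := by
          rw [← Finset.sum_mul_sum]
      _ = epsR u m * w^(2^m) * (Pw u m w⁻¹ * Pw u m w) := by rw [Pw, Pw]
  rw [hT1, hT2, hT3, hT4]
  ring

lemma Hw_eq_phiF (u : ℕ → Bool) (w : ℝ) (hw : w ≠ 0) : ∀ m : ℕ,
    Hw u m w = 2^m * PhiF (fun k => w^(2^k) / 2^(k+1))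
      (fun k => w^(2^k) + w⁻¹^(2^k)) (epsR u) 0 m := by
  intro m
  induction m with
  | zero => simp [Hw]
  | succ m ih =>
    rw [Hw_succ u m w hw, PP_prod u w hw m, ih]
    rw [phiF_succ_right]
    simp only [Nat.zero_add]
    rw [mul_add]
    congr 1
    · rw [pow_succ]; ring
    · have h2 : ((2:ℝ)^(m+1)) ≠ 0 := by positivity
      field_simp

end HwRec

section Combo

lemma combo_plus (u : ℕ → Bool) (m : ℕ) :
    xk m * Hw u m 2⁻¹ + Hw u m 2 = PhiF (vp m) DD (epsR u) 0 m := by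
  have hD1 : (fun k => ((2:ℝ)⁻¹)^(2^k) + ((2:ℝ)⁻¹)⁻¹^(2^k)) = DD := by
    funext k; rw [DD, xk, inv_inv, inv_pow]; ring
  have hD2 : (fun k => ((2:ℝ))^(2^k) + ((2:ℝ))⁻¹^(2^k)) = DD := by
    funext k; rw [DD, xk, inv_pow]
  rw [Hw_eq_phiF u 2⁻¹ (by norm_num) m, Hw_eq_phiF u 2 (by norm_num) m, hD1, hD2]
  have h1 : xk m * (2^m * PhiF (fun k => ((2:ℝ)⁻¹)^(2^k) / 2^(k+1)) DD (epsR u) 0 m)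
      = PhiF (fun k => (xk m * 2^m) * (((2:ℝ)⁻¹)^(2^k) / 2^(k+1))) DD (epsR u) 0 m := by
    rw [phiF_smul]; ring
  have h2 : (2:ℝ)^m * PhiF (fun k => ((2:ℝ))^(2^k) / 2^(k+1)) DD (epsR u) 0 m
      = PhiF (fun k => (2:ℝ)^m * (((2:ℝ))^(2^k) / 2^(k+1))) DD (epsR u) 0 m := by
    rw [phiF_smul]
  rw [h1, h2, ← phiF_add]
  congr 1
  funext k
  simp only [vp, Kc, xk]
  have e1 : ((2:ℝ)^(2^k)) ≠ 0 := by positivity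
  have e2 : ((2:ℝ)^(k+1)) ≠ 0 := by positivity
  have e3 : ((2:ℝ)^k) ≠ 0 := by positivity
  field_simp
  have hh : ((2:ℝ)⁻¹)^(2^k) * 2^(2^k) = 1 := by rw [← mul_pow]; norm_num
  linear_combination ((2:ℝ) ^ k * 2 ^ 2 ^ m * 2) * hh

lemma combo_minus (u : ℕ → Bool) (m : ℕ) :
    xk m * Hw u m 2⁻¹ - Hw u m 2 = PhiF (vm m) DD (epsR u) 0 m := by
  have hD1 : (fun k => ((2:ℝ)⁻¹)^(2^k) + ((2:ℝ)⁻¹)⁻¹^(2^k)) = DD := by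
    funext k; rw [DD, xk, inv_inv, inv_pow]; ring
  have hD2 : (fun k => ((2:ℝ))^(2^k) + ((2:ℝ))⁻¹^(2^k)) = DD := by
    funext k; rw [DD, xk, inv_pow]
  rw [Hw_eq_phiF u 2⁻¹ (by norm_num) m, Hw_eq_phiF u 2 (by norm_num) m, hD1, hD2]
  have h1 : xk m * (2^m * PhiF (fun k => ((2:ℝ)⁻¹)^(2^k) / 2^(k+1)) DD (epsR u) 0 m)
      = PhiF (fun k => (xk m * 2^m) * (((2:ℝ)⁻¹)^(2^k) / 2^(k+1))) DD (epsR u) 0 m := by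
    rw [phiF_smul]; ring
  have h2 : -((2:ℝ)^m * PhiF (fun k => ((2:ℝ))^(2^k) / 2^(k+1)) DD (epsR u) 0 m)
      = PhiF (fun k => (-(2:ℝ)^m) * (((2:ℝ))^(2^k) / 2^(k+1))) DD (epsR u) 0 m := by
    rw [phiF_smul]; ring
  rw [sub_eq_add_neg, h1, h2, ← phiF_add]
  congr 1
  funext k
  simp only [vm, Kc, xk]
  have e1 : ((2:ℝ)^(2^k)) ≠ 0 := by positivity
  have e2 : ((2:ℝ)^(k+1)) ≠ 0 := by positivity
  have e3 : ((2:ℝ)^k) ≠ 0 := by positivity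
  field_simp
  have hh : ((2:ℝ)⁻¹)^(2^k) * 2^(2^k) = 1 := by rw [← mul_pow]; norm_num
  linear_combination ((2:ℝ) ^ k * 2 ^ 2 ^ m * 2) * hh

end Combo

section Final

lemma ee_sign (m : ℕ) (x : Fin (2^m) → Bool) (u0 : Bool) (u : Fin m → Bool)
    (hxdef : ∀ t : Fin (2^m), x t = (u0 ^^ decide ((univ.filter fun i : Fin m =>
        u i = true ∧ (t : ℕ).testBit (i : ℕ) = true).card % 2 = 1)))
    (t : Fin (2^m)) :
    eeR (fun k => if h : k < m then u ⟨k, h⟩ else false) m (t : ℕ)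
      = (if u0 then (-1:ℝ) else 1) * (if x t then (-1:ℝ) else 1) := by
  set c := (univ.filter fun i : Fin m =>
      u i = true ∧ (t : ℕ).testBit (i : ℕ) = true).card with hc
  have h1 : eeR (fun k => if h : k < m then u ⟨k, h⟩ else false) m (t : ℕ) = (-1:ℝ)^c := by
    rw [eeR, ← Fin.prod_univ_eq_prod_range
      (fun k => if (if h : k < m then u ⟨k,h⟩ else false) ∧ (t:ℕ).testBit k then (-1:ℝ) else 1) m]
    have h2 : ∀ i : Fin m,
        (if (if h : (i:ℕ) < m then u ⟨(i:ℕ),h⟩ else false) ∧ (t:ℕ).testBit (i:ℕ) then (-1:ℝ) else 1)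
        = (-1:ℝ)^(if u i = true ∧ (t:ℕ).testBit (i:ℕ) = true then 1 else 0) := by
      intro i
      by_cases hu : u i <;> by_cases hb : (t:ℕ).testBit (i:ℕ) <;> simp [hu, hb]
    rw [Finset.prod_congr rfl (fun i _ => h2 i), Finset.prod_pow_eq_pow_sum]
    congr 1
    rw [hc, Finset.card_filter]
  rw [h1, hxdef t]
  by_cases hodd : c % 2 = 1
  · have ho : Odd c := Nat.odd_iff.mpr hodd
    rw [ho.neg_one_pow]
    by_cases h0 : u0 <;> simp [h0, hodd, ← hc]
  · have he : Even c := Nat.even_iff.mpr (by omega)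
    rw [he.neg_one_pow]
    by_cases h0 : u0 <;> simp [h0, hodd, ← hc]

lemma pair_repr (m : ℕ) (x : Fin (2^m) → Bool) (u0 : Bool) (u : Fin m → Bool)
    (hxdef : ∀ t : Fin (2^m), x t = (u0 ^^ decide ((univ.filter fun i : Fin m =>
        u i = true ∧ (t : ℕ).testBit (i : ℕ) = true).card % 2 = 1)))
    (W : ℕ → ℕ → ℝ) :
    ((∑ i ∈ univ.filter (fun i : Fin (2^m) => x i = false),
       ∑ j ∈ univ.filter (fun j : Fin (2^m) => x j = false ∧ i < j), W (i:ℕ) (j:ℕ))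
     + ∑ i ∈ univ.filter (fun i : Fin (2^m) => x i = true),
       ∑ j ∈ univ.filter (fun j : Fin (2^m) => x j = true ∧ i < j), W (i:ℕ) (j:ℕ))
    = (∑ i ∈ range (2^m), ∑ j ∈ range (2^m), if i < j then W i j else 0) / 2
      + (∑ i ∈ range (2^m), ∑ j ∈ range (2^m), if i < j then
          eeR (fun k => if h : k < m then u ⟨k, h⟩ else false) m i
            * eeR (fun k => if h : k < m then u ⟨k, h⟩ else false) m j * W i j else 0) / 2 := by
  set uN : ℕ → Bool := fun k => if h : k < m then u ⟨k, h⟩ else false with huN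
  have hEE : ∀ i j : Fin (2^m), eeR uN m (i:ℕ) * eeR uN m (j:ℕ)
      = (if x i then (-1:ℝ) else 1) * (if x j then (-1:ℝ) else 1) := by
    intro i j
    rw [ee_sign m x u0 u hxdef i, ee_sign m x u0 u hxdef j]
    by_cases h0 : u0 <;> by_cases hxi : x i <;> by_cases hxj : x j <;>
      simp [h0, hxi, hxj]
  have step1 : ((∑ i ∈ univ.filter (fun i : Fin (2^m) => x i = false),
       ∑ j ∈ univ.filter (fun j : Fin (2^m) => x j = false ∧ i < j), W (i:ℕ) (j:ℕ))
     + ∑ i ∈ univ.filter (fun i : Fin (2^m) => x i = true),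
       ∑ j ∈ univ.filter (fun j : Fin (2^m) => x j = true ∧ i < j), W (i:ℕ) (j:ℕ))
      = ∑ i : Fin (2^m), ∑ j : Fin (2^m),
        (if (i:ℕ) < (j:ℕ) then (1 + eeR uN m (i:ℕ) * eeR uN m (j:ℕ))/2 * W (i:ℕ) (j:ℕ) else 0) := by
    rw [Finset.sum_filter, Finset.sum_filter, ← Finset.sum_add_distrib]
    apply Finset.sum_congr rfl
    intro i _
    rcases Bool.eq_false_or_eq_true (x i) with hxi | hxi
    case inr =>
      have hne : ¬(x i = true) := by rw [hxi]; simp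
      rw [if_pos hxi, if_neg hne, add_zero, Finset.sum_filter]
      apply Finset.sum_congr rfl
      intro j _
      have hE := hEE i j
      rw [hxi] at hE
      by_cases hlt : i < j
      · have hlt' : (i:ℕ) < (j:ℕ) := hlt
        rcases Bool.eq_false_or_eq_true (x j) with hxj | hxj <;> rw [hxj] at hE <;>
          simp [hxj, hlt, hlt', hE] <;> ring
      · have hlt' : ¬((i:ℕ) < (j:ℕ)) := fun h => hlt h
        simp [hlt, hlt']
    case inl =>
      have hne : ¬(x i = false) := by rw [hxi]; simp
      rw [if_neg hne, if_pos hxi, zero_add, Finset.sum_filter]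
      apply Finset.sum_congr rfl
      intro j _
      have hE := hEE i j
      rw [hxi] at hE
      by_cases hlt : i < j
      · have hlt' : (i:ℕ) < (j:ℕ) := hlt
        rcases Bool.eq_false_or_eq_true (x j) with hxj | hxj <;> rw [hxj] at hE <;>
          simp [hxj, hlt, hlt', hE] <;> ring
      · have hlt' : ¬((i:ℕ) < (j:ℕ)) := fun h => hlt h
        simp [hlt, hlt']
  have step2 : ∀ F : ℕ → ℕ → ℝ, (∑ i : Fin (2^m), ∑ j : Fin (2^m), F (i:ℕ) (j:ℕ))
      = ∑ i ∈ range (2^m), ∑ j ∈ range (2^m), F i j := by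
    intro F
    rw [← Fin.sum_univ_eq_sum_range (fun i => ∑ j ∈ range (2^m), F i j) (2^m)]
    apply Finset.sum_congr rfl
    intro i _
    rw [← Fin.sum_univ_eq_sum_range (fun j => F (i:ℕ) j) (2^m)]
  rw [step1, step2 (fun a b => if a < b then (1 + eeR uN m a * eeR uN m b)/2 * W a b else 0)]
  have split : ∀ a b : ℕ, (if a < b then (1 + eeR uN m a * eeR uN m b)/2 * W a b else 0)
      = (if a < b then W a b else 0)/2 + (if a < b then eeR uN m a * eeR uN m b * W a b else 0)/2 := by
    intro a b
    by_cases h : a < b <;> simp [h] <;> ring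
  simp only [split]
  rw [Finset.sum_div, Finset.sum_div, ← Finset.sum_add_distrib]
  apply Finset.sum_congr rfl
  intro i _
  rw [Finset.sum_div, Finset.sum_div, ← Finset.sum_add_distrib]

end Final

section Main

lemma w_beta (n i j : ℕ) (hij : i < j) (hj : j < n) :
    ((2:ℝ)⁻¹)^(n - (j - i)) = (2⁻¹)^n * 2^(j - i) := by
  have h1 : ((2:ℝ)⁻¹)^(n-(j-i)) * (2⁻¹)^(j-i) = (2⁻¹)^n := by
    rw [← pow_add]; congr 1; omega
  have h2 : ((2:ℝ)⁻¹)^(j-i) * 2^(j-i) = 1 := by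
    rw [← mul_pow]; norm_num
  calc ((2:ℝ)⁻¹)^(n-(j-i)) = (2⁻¹)^(n-(j-i)) * ((2⁻¹)^(j-i) * 2^(j-i)) := by rw [h2, mul_one]
  _ = ((2⁻¹)^(n-(j-i)) * (2⁻¹)^(j-i)) * 2^(j-i) := by ring
  _ = (2⁻¹)^n * 2^(j-i) := by rw [h1]

lemma alpha_repr (m : ℕ) (x : Fin (2^m) → Bool) (u0 : Bool) (u : Fin m → Bool)
    (hxdef : ∀ t : Fin (2^m), x t = (u0 ^^ decide ((univ.filter fun i : Fin m =>
        u i = true ∧ (t : ℕ).testBit (i : ℕ) = true).card % 2 = 1))) :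
    alphaC x = (∑ i ∈ range (2^m), ∑ j ∈ range (2^m), if i < j then ((2:ℝ)⁻¹) ^ (j - i) else 0) / 2
      + Hw (fun k => if h : k < m then u ⟨k, h⟩ else false) m 2⁻¹ / 2 := by
  have h := pair_repr m x u0 u hxdef (fun a b => ((2:ℝ)⁻¹) ^ (b - a))
  rw [Hw]
  rw [← h]
  simp only [alphaC, one_div]

lemma beta_repr (m : ℕ) (x : Fin (2^m) → Bool) (u0 : Bool) (u : Fin m → Bool)
    (hxdef : ∀ t : Fin (2^m), x t = (u0 ^^ decide ((univ.filter fun i : Fin m =>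
        u i = true ∧ (t : ℕ).testBit (i : ℕ) = true).card % 2 = 1))) :
    betaC x = (∑ i ∈ range (2^m), ∑ j ∈ range (2^m),
        if i < j then ((2:ℝ)⁻¹) ^ (2^m - (j - i)) else 0) / 2
      + ((2:ℝ)⁻¹)^(2^m) * Hw (fun k => if h : k < m then u ⟨k, h⟩ else false) m 2 / 2 := by
  have h := pair_repr m x u0 u hxdef (fun a b => ((2:ℝ)⁻¹) ^ (2^m - (b - a)))
  have h2 : (∑ i ∈ range (2^m), ∑ j ∈ range (2^m), if i < j then
      eeR (fun k => if h : k < m then u ⟨k, h⟩ else false) m i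
        * eeR (fun k => if h : k < m then u ⟨k, h⟩ else false) m j
        * ((2:ℝ)⁻¹) ^ (2^m - (j - i)) else 0)
      = ((2:ℝ)⁻¹)^(2^m) * Hw (fun k => if h : k < m then u ⟨k, h⟩ else false) m 2 := by
    rw [Hw, Finset.mul_sum]
    apply Finset.sum_congr rfl
    intro i _
    rw [Finset.mul_sum]
    apply Finset.sum_congr rfl
    intro j hj
    by_cases hij : i < j
    · rw [if_pos hij, if_pos hij, w_beta (2^m) i j hij (mem_range.mp hj)]
      ring
    · rw [if_neg hij, if_neg hij, mul_zero]
  rw [← h2, ← h]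
  simp only [betaC, one_div]

lemma core (m : ℕ) (x y : Fin (2^m) → Bool) (u0x u0y : Bool) (ux uy : Fin m → Bool)
    (hxd : ∀ t : Fin (2^m), x t = (u0x ^^ decide ((univ.filter fun i : Fin m =>
        ux i = true ∧ (t : ℕ).testBit (i : ℕ) = true).card % 2 = 1)))
    (hyd : ∀ t : Fin (2^m), y t = (u0y ^^ decide ((univ.filter fun i : Fin m =>
        uy i = true ∧ (t : ℕ).testBit (i : ℕ) = true).card % 2 = 1)))
    (k0 : ℕ) (hk0m : k0 < m)
    (hxk0 : (fun k => if h : k < m then ux ⟨k, h⟩ else false) k0 = false)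
    (hyk0 : (fun k => if h : k < m then uy ⟨k, h⟩ else false) k0 = true)
    (hpre : ∀ j, j < k0 → (fun k => if h : k < m then ux ⟨k, h⟩ else false) j
        = (fun k => if h : k < m then uy ⟨k, h⟩ else false) j) :
    0 ≤ |alphaC x - alphaC y| - |betaC x - betaC y| := by
  set uNx : ℕ → Bool := fun k => if h : k < m then ux ⟨k, h⟩ else false with huNx
  set uNy : ℕ → Bool := fun k => if h : k < m then uy ⟨k, h⟩ else false with huNy
  set a' : ℝ := Hw uNx m 2⁻¹ - Hw uNy m 2⁻¹ with ha'
  set b' : ℝ := Hw uNx m 2 - Hw uNy m 2 with hb'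
  have hek : epsR uNx k0 = 1 := by rw [epsR, hxk0]; simp
  have he'k : epsR uNy k0 = -1 := by rw [epsR, hyk0]; simp
  have hpre' : ∀ j, j < k0 → epsR uNx j = epsR uNy j := fun j hj => by
    rw [epsR, epsR, hpre j hj]
  have KP := key_product m (epsR uNx) (epsR uNy) (epsR_pm uNx) (epsR_pm uNy)
    k0 hk0m hek he'k hpre'
  have hplus : PhiF (vp m) DD (epsR uNx) 0 m - PhiF (vp m) DD (epsR uNy) 0 m
      = xk m * a' + b' := by
    rw [← combo_plus uNx m, ← combo_plus uNy m]; ring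
  have hminus : PhiF (vm m) DD (epsR uNx) 0 m - PhiF (vm m) DD (epsR uNy) 0 m
      = xk m * a' - b' := by
    rw [← combo_minus uNx m, ← combo_minus uNy m]; ring
  rw [hplus, hminus] at KP
  have hX := xk_pos m
  have habs : |b'| ≤ xk m * |a'| := by
    have h5 : |b'|^2 ≤ (xk m * |a'|)^2 := by
      rw [sq_abs, mul_pow, sq_abs]
      nlinarith [KP]
    by_contra hcon
    push_neg at hcon
    have h6 : 0 ≤ xk m * |a'| := mul_nonneg hX.le (abs_nonneg a')
    nlinarith [h5, hcon, h6]
  have hα : alphaC x - alphaC y = a' / 2 := by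
    rw [alpha_repr m x u0x ux hxd, alpha_repr m y u0y uy hyd]; ring
  have hβ : betaC x - betaC y = ((2:ℝ)⁻¹)^(2^m) * b' / 2 := by
    rw [beta_repr m x u0x ux hxd, beta_repr m y u0y uy hyd]; ring
  rw [hα, hβ]
  have h2n : ((2:ℝ)⁻¹)^(2^m) = (xk m)⁻¹ := by rw [inv_pow, xk]
  rw [h2n]
  have e1 : |a'/2| = |a'|/2 := by rw [abs_div]; norm_num
  have e2 : |(xk m)⁻¹ * b' / 2| = (xk m)⁻¹ * |b'| / 2 := by
    rw [abs_div, abs_mul, abs_of_pos (inv_pos.mpr hX)]; norm_num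
  rw [e1, e2]
  have h3 : (xk m)⁻¹ * |b'| ≤ |a'| := by
    have h4 := mul_le_mul_of_nonneg_left habs (inv_pos.mpr hX).le
    rwa [← mul_assoc, inv_mul_cancel₀ hX.ne', one_mul] at h4
  linarith

end Main
end RMAux


/-- Condition (C2): for distinct `RM(m,1)` codewords sharing the same first bit,
`|α_x - α_y| - |β_x - β_y| ≥ 0`. -/
theorem RM1_alpha_beta_gap (m : ℕ) (hm : 4 ≤ m) (x y : Fin (2 ^ m) → Bool)
    (hx : x ∈ RM1 m) (hy : y ∈ RM1 m) (hxy : x ≠ y)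
    (hfirst : x ⟨0, by positivity⟩ = y ⟨0, by positivity⟩) :
    0 ≤ |alphaC x - alphaC y| - |betaC x - betaC y| := by
  obtain ⟨u0x, ux, hxd⟩ := hx
  obtain ⟨u0y, uy, hyd⟩ := hy
  have hx0 : x ⟨0, by positivity⟩ = u0x := by
    rw [hxd ⟨0, by positivity⟩]
    have hemp : (univ.filter fun i : Fin m =>
        ux i = true ∧ (((⟨0, by positivity⟩ : Fin (2^m)) : ℕ)).testBit (i : ℕ) = true) = ∅ := by
      apply Finset.filter_eq_empty_iff.mpr
      intro i _
      simp [Nat.zero_testBit]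
    rw [hemp]
    simp
  have hy0 : y ⟨0, by positivity⟩ = u0y := by
    rw [hyd ⟨0, by positivity⟩]
    have hemp : (univ.filter fun i : Fin m =>
        uy i = true ∧ (((⟨0, by positivity⟩ : Fin (2^m)) : ℕ)).testBit (i : ℕ) = true) = ∅ := by
      apply Finset.filter_eq_empty_iff.mpr
      intro i _
      simp [Nat.zero_testBit]
    rw [hemp]
    simp
  have hu0 : u0x = u0y := by rw [← hx0, ← hy0]; exact hfirst
  have hex : ∃ k, k < m ∧ (fun k => if h : k < m then ux ⟨k, h⟩ else false) k
      ≠ (fun k => if h : k < m then uy ⟨k, h⟩ else false) k := by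
    by_contra hco
    push_neg at hco
    apply hxy
    funext t
    rw [hxd t, hyd t, hu0]
    have hfil : (univ.filter fun i : Fin m => ux i = true ∧ (t : ℕ).testBit (i : ℕ) = true)
        = (univ.filter fun i : Fin m => uy i = true ∧ (t : ℕ).testBit (i : ℕ) = true) := by
      apply Finset.filter_congr
      intro i _
      have h1 := hco (i : ℕ) i.isLt
      simp only [dif_pos i.isLt, Fin.eta] at h1
      rw [h1]
    rw [hfil]
  set k0 := Nat.find hex with hk0def
  have hspec := Nat.find_spec hex
  have hmin : ∀ j, j < k0 → (fun k => if h : k < m then ux ⟨k, h⟩ else false) j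
      = (fun k => if h : k < m then uy ⟨k, h⟩ else false) j := by
    intro j hj
    by_contra hne
    have hjm : j < m := lt_trans hj hspec.1
    exact (Nat.find_min hex hj) ⟨hjm, hne⟩
  rcases Bool.eq_false_or_eq_true ((fun k => if h : k < m then ux ⟨k, h⟩ else false) k0)
    with hT | hF
  · -- ux-side is true at k0, so uy-side is false: swap roles
    have hyk : (fun k => if h : k < m then uy ⟨k, h⟩ else false) k0 = false := by
      rcases Bool.eq_false_or_eq_true ((fun k => if h : k < m then uy ⟨k, h⟩ else false) k0)
        with h | h
      · exact absurd (hT.trans h.symm) hspec.2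
      · exact h
    rw [abs_sub_comm (alphaC x) (alphaC y), abs_sub_comm (betaC x) (betaC y)]
    exact RMAux.core m y x u0y u0x uy ux hyd hxd k0 hspec.1 hyk hT
      (fun j hj => (hmin j hj).symm)
  · have hyk : (fun k => if h : k < m then uy ⟨k, h⟩ else false) k0 = true := by
      rcases Bool.eq_false_or_eq_true ((fun k => if h : k < m then uy ⟨k, h⟩ else false) k0)
        with h | h
      · exact h
      · exact absurd (hF.trans h.symm) hspec.2
    exact RMAux.core m x y u0x u0y ux uy hxd hyd k0 hspec.1 hF hyk hmin
end

section
/- Let m ≥ 4 and n = 2^m. For any codeword x ∈ RM(m,1), the coefficients satisfy |β_x − γ_x| ≥ 0.06 − 3·Σ_{k=16}^{n/2} k·(1/2)^k. -/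
open Finset

/-! ### Auxiliary development -/

/-- The signed pair sum `β - γ` in closed form. -/
noncomputable def Dfun {n : ℕ} (x : Fin n → Bool) : ℝ :=
  ∑ i : Fin n, ∑ j : Fin n,
    if (i:ℕ) < (j:ℕ) then
      ((1:ℝ)/2) ^ (n - ((j:ℕ) - (i:ℕ))) * (if x i = x j then 1 else -1)
    else 0

lemma bg_eq {n : ℕ} (x : Fin n → Bool) : betaC x - gammaC x = Dfun x := by
  unfold betaC gammaC Dfun
  simp only [Finset.sum_filter]
  rw [← Finset.sum_add_distrib, ← Finset.sum_add_distrib, ← Finset.sum_sub_distrib]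
  refine Finset.sum_congr rfl fun i _ => ?_
  rcases hxi : x i <;>
    simp only [hxi, if_true, if_false, Bool.true_eq_false, Bool.false_eq_true,
      add_zero, zero_add] <;>
    rw [← Finset.sum_sub_distrib] <;>
    refine Finset.sum_congr rfl fun j _ => ?_ <;>
    rcases hxj : x j <;> by_cases hij : i < j <;>
      simp [hxj, hij, Fin.lt_def] at * <;> try ring

/-- Integer version of `Dfun` (times `2^n`), for kernel computation. -/
def SZ {n : ℕ} (x : Fin n → Bool) : ℤ :=
  ∑ i : Fin n, ∑ j : Fin n,
    if (i:ℕ) < (j:ℕ) then (2:ℤ) ^ ((j:ℕ) - (i:ℕ)) * (if x i = x j then 1 else -1) else 0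

lemma Dfun_eq_SZ (x : Fin (2^4) → Bool) : Dfun x = (SZ x : ℝ) / 65536 := by
  unfold Dfun SZ
  push_cast
  rw [Finset.sum_div]
  refine Finset.sum_congr rfl fun i _ => ?_
  rw [Finset.sum_div]
  refine Finset.sum_congr rfl fun j _ => ?_
  by_cases hij : (i:ℕ) < (j:ℕ)
  · have hd : (j:ℕ) - (i:ℕ) < 16 := by omega
    have hexp : (2:ℝ) ^ ((j:ℕ) - (i:ℕ)) * 2 ^ (16 - ((j:ℕ) - (i:ℕ))) = 65536 := by
      rw [← pow_add]
      have : (j:ℕ) - (i:ℕ) + (16 - ((j:ℕ) - (i:ℕ))) = 16 := by omega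
      rw [this]; norm_num
    have h2 : ((1:ℝ)/2) ^ (16 - ((j:ℕ) - (i:ℕ))) = (2:ℝ) ^ ((j:ℕ) - (i:ℕ)) / 65536 := by
      rw [div_pow, one_pow, div_eq_div_iff (by positivity) (by norm_num), one_mul, hexp]
    rw [if_pos hij, if_pos hij]
    rw [h2]
    push_cast
    ring
  · rw [if_neg hij, if_neg hij, zero_div]

/-- Evaluation map for `RM(4,1)`. -/
def Xfun (u0 : Bool) (u : Fin 4 → Bool) : Fin (2^4) → Bool := fun t =>
  (u0 ^^ decide ((univ.filter fun i : Fin 4 =>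
        u i = true ∧ (t : ℕ).testBit (i : ℕ) = true).card % 2 = 1))

lemma SZ_bound : ∀ (u0 : Bool) (u : Fin 4 → Bool), (4006:ℤ) ≤ |SZ (Xfun u0 u)| := by decide

/-- Base case: any `RM(4,1)` codeword has `|D| ≥ 2003/32768`. -/
lemma base_case (x : Fin (2^4) → Bool) (hx : x ∈ RM1 4) :
    (2003:ℝ)/32768 ≤ |Dfun x| := by
  obtain ⟨u0, u, hu⟩ := hx
  have hxX : x = Xfun u0 u := funext fun t => hu t
  rw [hxX, Dfun_eq_SZ]
  have h := SZ_bound u0 u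
  have h' : (4006:ℝ) ≤ |(SZ (Xfun u0 u) : ℝ)| := by
    rw [← Int.cast_abs]
    exact_mod_cast h
  rw [abs_div]
  rw [abs_of_pos (by norm_num : (0:ℝ) < 65536)]
  linarith

/-- Geometric tail bound. -/
lemma geo_aux (N n i : ℕ) :
    (∑ j ∈ Finset.range N, if i < j ∧ j ≤ i + n then ((1:ℝ)/2) ^ (n - (j - i)) else 0) ≤ 2 := by
  have h1 : (∑ j ∈ Finset.range N, if i < j ∧ j ≤ i + n then ((1:ℝ)/2) ^ (n - (j - i)) else 0)
      ≤ ∑ j ∈ Finset.Ico (i+1) (i+n+1), ((1:ℝ)/2) ^ (n - (j - i)) := by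
    rw [← Finset.sum_filter]
    apply Finset.sum_le_sum_of_subset_of_nonneg
    · intro j hj
      simp only [Finset.mem_filter, Finset.mem_range, Finset.mem_Ico] at hj ⊢
      omega
    · intro j _ _; positivity
  have h2 : (∑ j ∈ Finset.Ico (i+1) (i+n+1), ((1:ℝ)/2) ^ (n - (j - i)))
      = ∑ t ∈ Finset.range n, ((1:ℝ)/2) ^ (n - 1 - t) := by
    rw [Finset.sum_Ico_eq_sum_range]
    have hn : i + n + 1 - (i + 1) = n := by omega
    rw [hn]
    refine Finset.sum_congr rfl fun t ht => ?_
    congr 1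
    omega
  have h3 : (∑ t ∈ Finset.range n, ((1:ℝ)/2) ^ (n - 1 - t))
      = ∑ t ∈ Finset.range n, ((1:ℝ)/2) ^ t :=
    Finset.sum_range_reflect (fun t => ((1:ℝ)/2) ^ t) n
  have h4 : (∑ t ∈ Finset.range n, ((1:ℝ)/2) ^ t) ≤ 2 := by
    rw [geom_sum_eq (by norm_num : ((1:ℝ)/2) ≠ 1)]
    have : (0:ℝ) ≤ ((1:ℝ)/2) ^ n := by positivity
    rw [div_le_iff_of_neg (by norm_num : ((1:ℝ)/2 - 1) < 0)]
    linarith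
  linarith

/-- Summand of the pair sum, as a function on `ℕ`. -/
noncomputable def Fterm (N : ℕ) (x' : ℕ → Bool) (i j : ℕ) : ℝ :=
  if i < j then ((1:ℝ)/2) ^ (N - (j - i)) * (if x' i = x' j then 1 else -1) else 0

lemma Dfun_range {n : ℕ} (x : Fin n → Bool) (x' : ℕ → Bool)
    (h : ∀ i : Fin n, x' i = x i) :
    Dfun x = ∑ i ∈ Finset.range n, ∑ j ∈ Finset.range n, Fterm n x' i j := by
  unfold Dfun Fterm
  rw [← Fin.sum_univ_eq_sum_range (fun i => ∑ j ∈ Finset.range n,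
      (if i < j then ((1:ℝ)/2) ^ (n - (j - i)) * (if x' i = x' j then 1 else -1) else 0)) n]
  refine Finset.sum_congr rfl fun i _ => ?_
  rw [← Fin.sum_univ_eq_sum_range (fun j =>
      (if (i:ℕ) < j then ((1:ℝ)/2) ^ (n - (j - (i:ℕ))) * (if x' (i:ℕ) = x' j then 1 else -1)
        else 0)) n]
  refine Finset.sum_congr rfl fun j _ => ?_
  rw [h i, h j]

lemma Fterm_split (N n : ℕ) (x' : ℕ → Bool) (i j : ℕ) :
    Fterm N x' i j = (if i + n < j then Fterm N x' i j else 0)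
      + (if i < j ∧ j ≤ i + n then Fterm N x' i j else 0) := by
  by_cases h3 : i < j
  · by_cases h1 : i + n < j
    · rw [if_pos h1, if_neg (by omega), add_zero]
    · rw [if_neg h1, if_pos ⟨h3, by omega⟩, zero_add]
  · rw [if_neg (by omega), if_neg (by omega : ¬(i < j ∧ j ≤ i + n))]
    simp [Fterm, h3]

lemma half_bound (n N : ℕ) (hN : N = n + n) (x : Fin N → Bool) (y : Fin n → Bool)
    (s : ℝ) (hs1 : |s| = 1)
    (hxy : ∀ (i : ℕ) (h1 : i < n) (h2 : i < N), x ⟨i, h2⟩ = y ⟨i, h1⟩)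
    (hsign : ∀ (t i : ℕ) (h1 : t < n) (hi : i < n) (h2 : t + n < N) (h3 : i < N),
      (if x ⟨i, h3⟩ = x ⟨t + n, h2⟩ then (1:ℝ) else -1)
        = s * (if y ⟨i, hi⟩ = y ⟨t, h1⟩ then (1:ℝ) else -1)) :
    |Dfun y| - 4 * (n : ℝ) * ((1:ℝ)/2)^n ≤ |Dfun x| := by
  have hnN : n ≤ N := by omega
  set x' : ℕ → Bool := fun i => if h : i < N then x ⟨i, h⟩ else false with hx'
  set y' : ℕ → Bool := fun i => if h : i < n then y ⟨i, h⟩ else false with hy'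
  have hD : Dfun x = ∑ i ∈ Finset.range N, ∑ j ∈ Finset.range N, Fterm N x' i j :=
    Dfun_range x x' (fun i => by simp only [hx', dif_pos i.isLt])
  have hDy : Dfun y = ∑ i ∈ Finset.range n, ∑ j ∈ Finset.range n, Fterm n y' i j :=
    Dfun_range y y' (fun i => by simp only [hy', dif_pos i.isLt])
  -- split into far and near parts
  have hsum_split : ∑ i ∈ Finset.range N, ∑ j ∈ Finset.range N, Fterm N x' i j
      = (∑ i ∈ Finset.range N, ∑ j ∈ Finset.range N,
          if i + n < j then Fterm N x' i j else 0)
      + (∑ i ∈ Finset.range N, ∑ j ∈ Finset.range N,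
          if i < j ∧ j ≤ i + n then Fterm N x' i j else 0) := by
    rw [← Finset.sum_add_distrib]
    refine Finset.sum_congr rfl fun i _ => ?_
    rw [← Finset.sum_add_distrib]
    exact Finset.sum_congr rfl fun j _ => Fterm_split N n x' i j
  -- far part equals s * Dfun y
  have hFar : (∑ i ∈ Finset.range N, ∑ j ∈ Finset.range N,
      if i + n < j then Fterm N x' i j else 0) = s * Dfun y := by
    have hzero : ∀ i ∈ Finset.range N, i ∉ Finset.range n →
        (∑ j ∈ Finset.range N, if i + n < j then Fterm N x' i j else 0) = 0 := by
      intro i hi hni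
      apply Finset.sum_eq_zero
      intro j hj
      rw [if_neg]
      simp only [Finset.mem_range] at *
      omega
    rw [← Finset.sum_subset (Finset.range_subset_range.mpr hnN) hzero]
    rw [hDy, Finset.mul_sum]
    refine Finset.sum_congr rfl fun i hi => ?_
    rw [Finset.mul_sum]
    rw [show Finset.range N = Finset.Ico 0 N by rw [Finset.range_eq_Ico],
      ← Finset.sum_Ico_consecutive _ (Nat.zero_le n) hnN]
    have hz : (∑ j ∈ Finset.Ico 0 n, if i + n < j then Fterm N x' i j else 0) = 0 := by
      apply Finset.sum_eq_zero
      intro j hj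
      rw [if_neg]
      simp only [Finset.mem_Ico] at hj
      omega
    rw [hz, zero_add, Finset.sum_Ico_eq_sum_range]
    have hNn : N - n = n := by omega
    rw [hNn]
    refine Finset.sum_congr rfl fun t ht => ?_
    simp only [Finset.mem_range] at hi ht
    rw [show n + t = t + n from Nat.add_comm n t]
    by_cases hit : i < t
    · rw [if_pos (show i + n < t + n by omega)]
      unfold Fterm
      rw [if_pos hit, if_pos (show i < t + n by omega)]
      rw [show N - (t + n - i) = n - (t - i) by omega]
      have hxi' : x' i = x ⟨i, show i < N by omega⟩ := by
        simp only [hx']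
        exact dif_pos (show i < N by omega)
      have hyi : y' i = y ⟨i, show i < n by omega⟩ := by
        simp only [hy']
        exact dif_pos (show i < n by omega)
      have hyt : y' t = y ⟨t, ht⟩ := by
        simp only [hy']
        exact dif_pos ht
      have hxj : x' (t + n) = x ⟨t + n, show t + n < N by omega⟩ := by
        simp only [hx']
        exact dif_pos (show t + n < N by omega)
      rw [hxi', hxj, hyi, hyt, hsign t i ht (show i < n by omega)
        (show t + n < N by omega) (show i < N by omega)]
      ring
    · rw [if_neg (show ¬(i + n < t + n) by omega)]
      unfold Fterm
      rw [if_neg hit, mul_zero]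
  -- near part is small
  have hRb : |∑ i ∈ Finset.range N, ∑ j ∈ Finset.range N,
      if i < j ∧ j ≤ i + n then Fterm N x' i j else 0| ≤ 4 * (n:ℝ) * ((1:ℝ)/2)^n := by
    have step2 : ∀ i ∈ Finset.range N, |∑ j ∈ Finset.range N,
        if i < j ∧ j ≤ i + n then Fterm N x' i j else 0| ≤ ((1:ℝ)/2)^n * 2 := by
      intro i _
      have s22 : ∀ j ∈ Finset.range N, |if i < j ∧ j ≤ i + n then Fterm N x' i j else 0|
          ≤ ((1:ℝ)/2)^n * (if i < j ∧ j ≤ i + n then ((1:ℝ)/2)^(n - (j - i)) else 0) := by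
        intro j _
        by_cases hc : i < j ∧ j ≤ i + n
        · rw [if_pos hc, if_pos hc]
          unfold Fterm
          rw [if_pos hc.1, abs_mul,
            abs_of_nonneg (by positivity : (0:ℝ) ≤ ((1:ℝ)/2) ^ (N - (j - i)))]
          have he : |if x' i = x' j then (1:ℝ) else -1| = 1 := by
            by_cases heq : x' i = x' j <;> simp [heq]
          rw [he, mul_one]
          have hexp : N - (j - i) = n + (n - (j - i)) := by omega
          rw [hexp, pow_add]
        · rw [if_neg hc, if_neg hc, abs_zero, mul_zero]
      calc |∑ j ∈ Finset.range N, if i < j ∧ j ≤ i + n then Fterm N x' i j else 0|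
          ≤ ∑ j ∈ Finset.range N, |if i < j ∧ j ≤ i + n then Fterm N x' i j else 0| :=
            Finset.abs_sum_le_sum_abs _ _
        _ ≤ ∑ j ∈ Finset.range N, ((1:ℝ)/2)^n *
            (if i < j ∧ j ≤ i + n then ((1:ℝ)/2)^(n - (j - i)) else 0) :=
          Finset.sum_le_sum s22
        _ = ((1:ℝ)/2)^n * ∑ j ∈ Finset.range N,
            (if i < j ∧ j ≤ i + n then ((1:ℝ)/2)^(n - (j - i)) else 0) :=
          (Finset.mul_sum _ _ _).symm
        _ ≤ ((1:ℝ)/2)^n * 2 :=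
          mul_le_mul_of_nonneg_left (geo_aux N n i) (by positivity)
    calc |∑ i ∈ Finset.range N, ∑ j ∈ Finset.range N,
        if i < j ∧ j ≤ i + n then Fterm N x' i j else 0|
        ≤ ∑ i ∈ Finset.range N, |∑ j ∈ Finset.range N,
            if i < j ∧ j ≤ i + n then Fterm N x' i j else 0| :=
          Finset.abs_sum_le_sum_abs _ _
      _ ≤ ∑ _i ∈ Finset.range N, ((1:ℝ)/2)^n * 2 := Finset.sum_le_sum step2
      _ = (N : ℝ) * (((1:ℝ)/2)^n * 2) := by
          rw [Finset.sum_const, Finset.card_range, nsmul_eq_mul]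
      _ = 4 * (n:ℝ) * ((1:ℝ)/2)^n := by
          have : (N : ℝ) = (n : ℝ) + (n : ℝ) := by rw [hN]; push_cast; ring
          rw [this]
          ring
  -- assemble
  have key : Dfun x = s * Dfun y + (∑ i ∈ Finset.range N, ∑ j ∈ Finset.range N,
      if i < j ∧ j ≤ i + n then Fterm N x' i j else 0) := by
    rw [hD, hsum_split, hFar]
  have h5 : |s * Dfun y| ≤ |Dfun x| + |∑ i ∈ Finset.range N, ∑ j ∈ Finset.range N,
      if i < j ∧ j ≤ i + n then Fterm N x' i j else 0| := by
    rw [key]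
    have := abs_add_le (s * Dfun y + (∑ i ∈ Finset.range N, ∑ j ∈ Finset.range N,
      if i < j ∧ j ≤ i + n then Fterm N x' i j else 0))
      (-(∑ i ∈ Finset.range N, ∑ j ∈ Finset.range N,
      if i < j ∧ j ≤ i + n then Fterm N x' i j else 0))
    simpa using this
  have h6 : |s * Dfun y| = |Dfun y| := by rw [abs_mul, hs1, one_mul]
  rw [h6] at h5
  linarith

lemma step_lemma (m : ℕ) (x : Fin (2^(m+1)) → Bool) (hx : x ∈ RM1 (m+1)) :
    ∃ y ∈ RM1 m, |Dfun y| - 4 * ((2^m : ℕ) : ℝ) * ((1:ℝ)/2)^(2^m) ≤ |Dfun x| := by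
  obtain ⟨u0, u, hu⟩ := hx
  have hN : 2^(m+1) = 2^m + 2^m := by rw [pow_succ]; omega
  have hle : (2:ℕ)^m ≤ 2^(m+1) := Nat.pow_le_pow_right (by norm_num) (by omega)
  refine ⟨fun t => x (Fin.castLE hle t), ?_, ?_⟩
  · -- membership
    refine ⟨u0, fun i => u i.castSucc, fun t => ?_⟩
    show x (Fin.castLE hle t) = _
    rw [hu (Fin.castLE hle t)]
    simp only [Fin.coe_castLE]
    have hcard : (univ.filter fun i : Fin (m+1) =>
        u i = true ∧ (t:ℕ).testBit (i:ℕ) = true).card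
        = (univ.filter fun i : Fin m =>
            u i.castSucc = true ∧ (t:ℕ).testBit (i:ℕ) = true).card := by
      rw [Finset.card_filter, Finset.card_filter, Fin.sum_univ_castSucc]
      have hbit : (t:ℕ).testBit m = false := Nat.testBit_eq_false_of_lt t.isLt
      simp [hbit]
    congr 1
    rw [decide_eq_decide]
    rw [hcard]
  · -- bound, via half_bound
    -- bit facts
    have tb1 : ∀ t i : ℕ, t < 2^m → i < m → (t + 2^m).testBit i = t.testBit i := by
      intro t i ht hi
      rw [Nat.testBit_eq_decide_div_mod_eq, Nat.testBit_eq_decide_div_mod_eq]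
      have hsplit : (2:ℕ)^m = 2^(m-i) * 2^i := by rw [← pow_add]; congr 1; omega
      have hdiv : (t + 2^m) / 2^i = t / 2^i + 2^(m-i) := by
        rw [hsplit, Nat.add_mul_div_right _ _ (by positivity : 0 < (2:ℕ)^i)]
      rw [hdiv]
      have he : (2:ℕ)^(m-i) = 2 * 2^(m-i-1) := by
        rw [← pow_succ']
        congr 1
        omega
      rw [he]
      simp [Nat.add_mul_mod_self_left]
    have tb2 : ∀ t : ℕ, t < 2^m → (t + 2^m).testBit m = true := by
      intro t ht
      rw [Nat.testBit_eq_decide_div_mod_eq]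
      have hdiv : (t + 2^m) / 2^m = 1 := by
        rw [Nat.add_div_right _ (by positivity : 0 < (2:ℕ)^m), Nat.div_eq_of_lt ht]
      rw [hdiv]
      rfl
    -- shifted-half relation
    have hx2 : ∀ (t : ℕ) (h1 : t < 2^m) (h2 : t + 2^m < 2^(m+1)),
        x ⟨t + 2^m, h2⟩ = (u (Fin.last m) ^^ x ⟨t, by omega⟩) := by
      intro t h1 h2
      rw [hu ⟨t + 2^m, h2⟩, hu ⟨t, by omega⟩]
      have hc1 : (univ.filter fun i : Fin (m+1) =>
          u i = true ∧ (t + 2^m).testBit (i:ℕ) = true).card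
          = (univ.filter fun i : Fin (m+1) =>
              u i = true ∧ t.testBit (i:ℕ) = true).card
            + (if u (Fin.last m) = true then 1 else 0) := by
        rw [Finset.card_filter, Finset.card_filter, Fin.sum_univ_castSucc,
          Fin.sum_univ_castSucc]
        have hbit : t.testBit m = false := Nat.testBit_eq_false_of_lt h1
        have hbit2 : (t + 2^m).testBit m = true := tb2 t h1
        have hsum : (∑ i : Fin m,
            if u i.castSucc = true ∧ (t + 2^m).testBit ((i.castSucc : Fin (m+1)) : ℕ) = true
            then 1 else 0)
            = ∑ i : Fin m,
              if u i.castSucc = true ∧ t.testBit ((i.castSucc : Fin (m+1)) : ℕ) = true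
              then 1 else 0 := by
          refine Finset.sum_congr rfl fun i _ => ?_
          rw [Fin.coe_castSucc, tb1 t (i:ℕ) h1 i.isLt]
        have hlast1 : (if u (Fin.last m) = true ∧
            (t + 2^m).testBit ((Fin.last m : Fin (m+1)) : ℕ) = true then 1 else 0)
            = (if u (Fin.last m) = true then 1 else 0) := by
          simp [Fin.val_last, hbit2]
        have hlast2 : (if u (Fin.last m) = true ∧
            t.testBit ((Fin.last m : Fin (m+1)) : ℕ) = true then 1 else 0) = 0 := by
          simp [Fin.val_last, hbit]
        rw [hsum, hlast1, hlast2, add_zero]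
      simp only [hc1]
      rcases hb : u (Fin.last m) with _ | _
      · simp
      · rw [if_pos rfl]
        have hd : ∀ c : ℕ, (decide ((c + 1) % 2 = 1)) = !(decide (c % 2 = 1)) := by
          intro c
          rw [← decide_not]
          exact decide_eq_decide.mpr (by omega)
        rw [hd]
        cases u0 <;>
          cases (decide ((univ.filter fun i : Fin (m+1) =>
            u i = true ∧ t.testBit (i:ℕ) = true).card % 2 = 1)) <;> rfl
    -- sign factor
    obtain ⟨s, hs1, hsign0⟩ : ∃ s : ℝ, |s| = 1 ∧ ∀ p q : Bool,
        (if p = (u (Fin.last m) ^^ q) then (1:ℝ) else -1)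
          = s * (if p = q then (1:ℝ) else -1) := by
      cases hb : u (Fin.last m) with
      | false => exact ⟨1, abs_one, fun p q => by cases p <;> cases q <;> simp⟩
      | true => exact ⟨-1, by norm_num, fun p q => by cases p <;> cases q <;> simp⟩
    have hres := half_bound (2^m) (2^(m+1)) hN x (fun t => x (Fin.castLE hle t)) s hs1
      (fun i h1 h2 => rfl)
      (fun t i h1 hi h2 h3 => by
        rw [hx2 t h1 h2]
        exact hsign0 (x ⟨i, h3⟩) (x ⟨t, by omega⟩))
    exact hres

lemma main_ind : ∀ m : ℕ, 4 ≤ m → ∀ x : Fin (2^m) → Bool, x ∈ RM1 m →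
    (1967:ℝ)/32768 + (9/2) * ((2:ℝ)^m) * ((1:ℝ)/2)^(2^m) ≤ |Dfun x| := by
  intro m hm
  induction m, hm using Nat.le_induction with
  | base =>
    intro x hx
    have h := base_case x hx
    have hval : (9/2 : ℝ) * ((2:ℝ)^4) * ((1:ℝ)/2)^(2^4) = 36/32768 := by norm_num
    rw [hval]
    linarith
  | succ m hm ih =>
    intro x hx
    obtain ⟨y, hy, hstep⟩ := step_lemma m x hx
    have h1 := ih y hy
    have hcast : (((2:ℕ)^m : ℕ) : ℝ) = (2:ℝ)^m := by push_cast; ring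
    rw [hcast] at hstep
    have hw : ((1:ℝ)/2)^(2^m) ≤ ((1:ℝ)/2)^5 := by
      apply pow_le_pow_of_le_one (by norm_num) (by norm_num)
      have : 2^4 ≤ 2^m := Nat.pow_le_pow_right (by norm_num) hm
      omega
    have hw0 : (0:ℝ) ≤ ((1:ℝ)/2)^(2^m) := by positivity
    have hsq : ((1:ℝ)/2)^(2^(m+1)) = (((1:ℝ)/2)^(2^m))^2 := by
      rw [pow_succ, pow_mul]
    have h2m : (0:ℝ) < 2^m := by positivity
    have h2 : (9/2 : ℝ) * ((2:ℝ)^(m+1)) * ((1:ℝ)/2)^(2^(m+1))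
        ≤ (1/2 : ℝ) * ((2:ℝ)^m) * ((1:ℝ)/2)^(2^m) := by
      rw [hsq, pow_succ]
      nlinarith [mul_nonneg (mul_nonneg h2m.le hw0)
        (by linarith : (0:ℝ) ≤ 1/2 - 9 * ((1:ℝ)/2)^(2^m))]
    linarith

/-- Condition (C4): for any `RM(m,1)` codeword,
`|β_x - γ_x| ≥ 0.06 - 3·Σ_{k=16}^{n/2} k (1/2)^k`. -/
theorem RM1_beta_gamma_gap (m : ℕ) (hm : 4 ≤ m) (x : Fin (2 ^ m) → Bool)
    (hx : x ∈ RM1 m) :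
    0.06 - 3 * ∑ k ∈ Finset.Icc (16 : ℕ) (2 ^ m / 2), (k : ℝ) * ((1:ℝ)/2) ^ k ≤
      |betaC x - gammaC x| := by
  have h := main_ind m hm x hx
  have h0 : (0:ℝ) ≤ ∑ k ∈ Finset.Icc (16 : ℕ) (2 ^ m / 2), (k : ℝ) * ((1:ℝ)/2) ^ k := by
    apply Finset.sum_nonneg
    intro k _
    positivity
  have h1 : (0:ℝ) ≤ (9/2) * ((2:ℝ)^m) * ((1:ℝ)/2)^(2^m) := by positivity
  rw [bg_eq]
  have h2 : (0.06:ℝ) ≤ 1967/32768 := by norm_num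
  linarith
end

section
/- Let x be a binary sequence of length n ≥ 1 and let x̂ = x‖x be the concatenation of x with itself (of length 2n). Then α_{x̂} = 2α_x + β_x + (1/2)^n·α_x + n·(1/2)^n, where the coefficients of x̂ are computed with respect to its length 2n. -/
open Finset

lemma sum_pair_eq (m : ℕ) (x : Fin m → Bool) (g : Fin m → Fin m → ℝ) :
    ((∑ i ∈ univ.filter (fun i : Fin m => x i = false),
       ∑ j ∈ univ.filter (fun j : Fin m => x j = false ∧ i < j), g i j)
    + ∑ i ∈ univ.filter (fun i : Fin m => x i = true),
        ∑ j ∈ univ.filter (fun j : Fin m => x j = true ∧ i < j), g i j)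
    = ∑ i, ∑ j, if x i = x j ∧ i < j then g i j else 0 := by
  rw [Finset.sum_filter, Finset.sum_filter, ← Finset.sum_add_distrib]
  refine Finset.sum_congr rfl fun i _ => ?_
  cases hx : x i
  · simp only [hx]
    simp only [if_true, if_false, Bool.true_eq_false, Bool.false_eq_true, add_zero, zero_add]
    rw [Finset.sum_filter]
    refine Finset.sum_congr rfl fun j _ => ?_
    cases hj : x j <;> simp [hj]
  · simp only [hx]
    simp only [if_true, if_false, Bool.true_eq_false, Bool.false_eq_true, add_zero, zero_add]
    rw [Finset.sum_filter]
    refine Finset.sum_congr rfl fun j _ => ?_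
    cases hj : x j <;> simp [hj]

lemma cross_sum (n : ℕ) (x : Fin n → Bool) :
    (∑ i : Fin n, ∑ j : Fin n, if x i = x j then ((1:ℝ)/2) ^ (n + (j:ℕ) - (i:ℕ)) else 0)
    = ((1:ℝ)/2)^n * (∑ i : Fin n, ∑ j : Fin n,
        if x i = x j ∧ i < j then ((1:ℝ)/2)^((j:ℕ)-(i:ℕ)) else 0)
      + (∑ i : Fin n, ∑ j : Fin n,
        if x i = x j ∧ i < j then ((1:ℝ)/2)^(n-((j:ℕ)-(i:ℕ))) else 0)
      + (n : ℝ) * ((1:ℝ)/2)^n := by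
  have split : ∀ i j : Fin n,
      (if x i = x j then ((1:ℝ)/2) ^ (n + (j:ℕ) - (i:ℕ)) else 0)
      = (if x i = x j ∧ i < j then ((1:ℝ)/2) ^ (n + (j:ℕ) - (i:ℕ)) else 0)
      + (if x i = x j ∧ j < i then ((1:ℝ)/2) ^ (n + (j:ℕ) - (i:ℕ)) else 0)
      + (if j = i then ((1:ℝ)/2) ^ n else 0) := by
    intro i j
    rcases lt_trichotomy i j with h|h|h
    · simp [h, h.ne', asymm h]
    · subst h
      simp [lt_irrefl, Nat.add_sub_cancel]
    · simp [h, h.ne, asymm h]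
  calc (∑ i : Fin n, ∑ j : Fin n, if x i = x j then ((1:ℝ)/2) ^ (n + (j:ℕ) - (i:ℕ)) else 0)
      = (∑ i : Fin n, ∑ j : Fin n,
          if x i = x j ∧ i < j then ((1:ℝ)/2) ^ (n + (j:ℕ) - (i:ℕ)) else 0)
        + (∑ i : Fin n, ∑ j : Fin n,
          if x i = x j ∧ j < i then ((1:ℝ)/2) ^ (n + (j:ℕ) - (i:ℕ)) else 0)
        + (∑ i : Fin n, ∑ j : Fin n, if j = i then ((1:ℝ)/2) ^ n else 0) := by
        simp only [split, Finset.sum_add_distrib]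
    _ = ((1:ℝ)/2)^n * (∑ i : Fin n, ∑ j : Fin n,
          if x i = x j ∧ i < j then ((1:ℝ)/2)^((j:ℕ)-(i:ℕ)) else 0)
        + (∑ i : Fin n, ∑ j : Fin n,
          if x i = x j ∧ i < j then ((1:ℝ)/2)^(n-((j:ℕ)-(i:ℕ))) else 0)
        + (n : ℝ) * ((1:ℝ)/2)^n := by
        congr 1
        · congr 1
          · rw [Finset.mul_sum]
            refine Finset.sum_congr rfl fun i _ => ?_
            rw [Finset.mul_sum]
            refine Finset.sum_congr rfl fun j _ => ?_
            split_ifs with h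
            · have hij : (i:ℕ) < (j:ℕ) := h.2
              have : n + (j:ℕ) - (i:ℕ) = n + ((j:ℕ) - (i:ℕ)) := by omega
              rw [this, pow_add]
            · ring
          · rw [Finset.sum_comm]
            refine Finset.sum_congr rfl fun i _ => ?_
            refine Finset.sum_congr rfl fun j _ => ?_
            have hj : (j:ℕ) < n := j.isLt
            by_cases h : x i = x j ∧ i < j
            · have h' : x j = x i ∧ i < j := ⟨h.1.symm, h.2⟩
              rw [if_pos h, if_pos h']
              have hij : (i:ℕ) < (j:ℕ) := h.2
              congr 1
              omega
            · rw [if_neg h, if_neg ?_]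
              intro h'
              exact h ⟨h'.1.symm, h'.2⟩
        · simp [Finset.sum_ite_eq, Finset.card_univ, mul_comm]

lemma alphaC_eq {m : ℕ} (x : Fin m → Bool) :
    alphaC x = ∑ i : Fin m, ∑ j : Fin m,
      if x i = x j ∧ i < j then ((1:ℝ)/2) ^ ((j:ℕ) - (i:ℕ)) else 0 :=
  sum_pair_eq m x _

lemma betaC_eq {m : ℕ} (x : Fin m → Bool) :
    betaC x = ∑ i : Fin m, ∑ j : Fin m,
      if x i = x j ∧ i < j then ((1:ℝ)/2) ^ (m - ((j:ℕ) - (i:ℕ))) else 0 :=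
  sum_pair_eq m x _

/-- Lemma 3(a): `α_{x‖x} = 2α_x + β_x + (1/2)^n·α_x + n·(1/2)^n`. -/
theorem alpha_append_self (n : ℕ) (hn : 1 ≤ n) (x : Fin n → Bool) :
    alphaC (Fin.append x x) =
      2 * alphaC x + betaC x + ((1:ℝ)/2) ^ n * alphaC x + (n : ℝ) * ((1:ℝ)/2) ^ n := by
  have h1 : ∀ i j : Fin n, (Fin.castAdd n i < Fin.castAdd n j) = (i < j) := by
    intro i j
    simp only [eq_iff_iff, Fin.lt_def, Fin.coe_castAdd]
  have h2 : ∀ i j : Fin n, Fin.castAdd n i < Fin.natAdd n j := by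
    intro i j
    simp only [Fin.lt_def, Fin.coe_castAdd, Fin.coe_natAdd]
    exact lt_of_lt_of_le i.isLt (Nat.le_add_right n j)
  have h3 : ∀ i j : Fin n, ¬ (Fin.natAdd n i < Fin.castAdd n j) := by
    intro i j
    simp only [Fin.lt_def, Fin.coe_castAdd, Fin.coe_natAdd]
    omega
  have h4 : ∀ i j : Fin n, (Fin.natAdd n i < Fin.natAdd n j) = (i < j) := by
    intro i j
    simp only [eq_iff_iff, Fin.lt_def, Fin.coe_natAdd]
    omega
  rw [alphaC_eq, alphaC_eq, betaC_eq]
  simp only [Fin.sum_univ_add, Fin.append_left, Fin.append_right, Fin.coe_castAdd,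
    Fin.coe_natAdd, h1, h2, h3, h4, and_true, and_false, if_false, Finset.sum_const_zero,
    Nat.add_sub_add_left, zero_add, add_zero]
  rw [Finset.sum_add_distrib, cross_sum]
  ring
end

section
/- Let x be a binary sequence of length n ≥ 1 and let x̂ = x‖x be the concatenation of x with itself (of length 2n). Then β_{x̂} = β_x + (1/2)^{n−1}·β_x + (1/2)^n·α_x + n·(1/2)^n, where the coefficients of x̂ are computed with respect to its length 2n. -/
open Finset

lemma ite_sum_merge {α : Type*} (s : Finset α) (p : Prop) [Decidable p]
    (q : α → Prop) [DecidablePred q] (t : α → ℝ) :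
    (if p then (∑ j ∈ s, if q j then t j else 0) else 0)
      = ∑ j ∈ s, if p ∧ q j then t j else 0 := by
  split_ifs with h <;> simp [h]

lemma quad (n : ℕ) (hn : 1 ≤ n) (x : Fin n → Bool) (b : Bool) :
    (∑ i : Fin (n+n), ∑ j : Fin (n+n),
       if Fin.append x x i = b ∧ (Fin.append x x j = b ∧ i < j)
       then ((1:ℝ)/2) ^ ((n+n) - ((j:ℕ) - (i:ℕ))) else 0)
    = (1 + ((1:ℝ)/2)^(n-1)) *
        (∑ i : Fin n, ∑ j : Fin n,
          if x i = b ∧ (x j = b ∧ i < j)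
          then ((1:ℝ)/2) ^ (n - ((j:ℕ) - (i:ℕ))) else 0)
      + ((1:ℝ)/2)^n *
        (∑ i : Fin n, ∑ j : Fin n,
          if x i = b ∧ (x j = b ∧ i < j)
          then ((1:ℝ)/2) ^ ((j:ℕ) - (i:ℕ)) else 0)
      + (∑ i : Fin n, if x i = b then ((1:ℝ)/2)^n else 0) := by
  simp only [Fin.lt_def]
  rw [Fin.sum_univ_add]
  simp only [Fin.sum_univ_add, Fin.append_left, Fin.append_right,
    Fin.coe_castAdd, Fin.coe_natAdd]
  rw [Finset.sum_add_distrib, Finset.sum_add_distrib]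
  set Sb := (∑ i : Fin n, ∑ j : Fin n,
      if x i = b ∧ (x j = b ∧ (i:ℕ) < (j:ℕ))
      then ((1:ℝ)/2) ^ (n - ((j:ℕ) - (i:ℕ))) else 0) with hSb
  set Sa := (∑ i : Fin n, ∑ j : Fin n,
      if x i = b ∧ (x j = b ∧ (i:ℕ) < (j:ℕ))
      then ((1:ℝ)/2) ^ ((j:ℕ) - (i:ℕ)) else 0) with hSa
  set C := (∑ i : Fin n, if x i = b then ((1:ℝ)/2)^n else 0) with hC
  have hLL : (∑ i : Fin n, ∑ j : Fin n,
      if x i = b ∧ (x j = b ∧ (i:ℕ) < (j:ℕ))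
      then ((1:ℝ)/2) ^ ((n+n) - ((j:ℕ) - (i:ℕ))) else 0) = ((1:ℝ)/2)^n * Sb := by
    rw [hSb, Finset.mul_sum]
    refine Finset.sum_congr rfl fun i _ => ?_
    rw [Finset.mul_sum]
    refine Finset.sum_congr rfl fun j _ => ?_
    have hj := j.isLt
    split_ifs with h
    · rw [show (n+n) - ((j:ℕ) - (i:ℕ)) = n + (n - ((j:ℕ) - (i:ℕ))) by omega, pow_add]
    · ring
  have hRR : (∑ i : Fin n, ∑ j : Fin n,
      if x i = b ∧ (x j = b ∧ n + (i:ℕ) < n + (j:ℕ))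
      then ((1:ℝ)/2) ^ ((n+n) - ((n + (j:ℕ)) - (n + (i:ℕ)))) else 0) = ((1:ℝ)/2)^n * Sb := by
    rw [hSb, Finset.mul_sum]
    refine Finset.sum_congr rfl fun i _ => ?_
    rw [Finset.mul_sum]
    refine Finset.sum_congr rfl fun j _ => ?_
    have hj := j.isLt
    rw [show (n + (j:ℕ)) - (n + (i:ℕ)) = (j:ℕ) - (i:ℕ) by omega]
    split_ifs with h h2 h2
    · rw [show (n+n) - ((j:ℕ) - (i:ℕ)) = n + (n - ((j:ℕ) - (i:ℕ))) by omega, pow_add]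
    · exact absurd ⟨h.1, h.2.1, by omega⟩ h2
    · exact absurd ⟨h2.1, h2.2.1, by omega⟩ h
    · ring
  have hRL : (∑ i : Fin n, ∑ j : Fin n,
      if x i = b ∧ (x j = b ∧ n + (i:ℕ) < (j:ℕ))
      then ((1:ℝ)/2) ^ ((n+n) - ((j:ℕ) - (n + (i:ℕ)))) else 0) = 0 := by
    refine Finset.sum_eq_zero fun i _ => Finset.sum_eq_zero fun j _ => ?_
    have hj := j.isLt
    rw [if_neg]
    rintro ⟨-, -, h⟩
    omega
  have hLR : (∑ i : Fin n, ∑ j : Fin n,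
      if x i = b ∧ (x j = b ∧ (i:ℕ) < n + (j:ℕ))
      then ((1:ℝ)/2) ^ ((n+n) - ((n + (j:ℕ)) - (i:ℕ))) else 0)
      = Sb + ((1:ℝ)/2)^n * Sa + C := by
    have split : ∀ i j : Fin n,
        (if x i = b ∧ (x j = b ∧ (i:ℕ) < n + (j:ℕ))
         then ((1:ℝ)/2) ^ ((n+n) - ((n + (j:ℕ)) - (i:ℕ))) else 0)
        = (if x i = b ∧ (x j = b ∧ (i:ℕ) < (j:ℕ))
           then ((1:ℝ)/2) ^ (n - ((j:ℕ) - (i:ℕ))) else 0)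
        + (if x i = b ∧ (x j = b ∧ (i:ℕ) = (j:ℕ))
           then ((1:ℝ)/2) ^ n else 0)
        + (if x i = b ∧ (x j = b ∧ (j:ℕ) < (i:ℕ))
           then ((1:ℝ)/2) ^ n * ((1:ℝ)/2) ^ ((i:ℕ) - (j:ℕ)) else 0) := by
      intro i j
      have hi := i.isLt
      have hj := j.isLt
      by_cases hb : x i = b ∧ x j = b
      · have hmain : x i = b ∧ (x j = b ∧ (i:ℕ) < n + (j:ℕ)) := ⟨hb.1, hb.2, by omega⟩
        rcases lt_trichotomy (i:ℕ) (j:ℕ) with h | h | h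
        · rw [if_pos hmain, if_pos ⟨hb.1, hb.2, h⟩,
            if_neg (show ¬(x i = b ∧ (x j = b ∧ (i:ℕ) = (j:ℕ))) from
              by rintro ⟨-, -, hc⟩; omega),
            if_neg (show ¬(x i = b ∧ (x j = b ∧ (j:ℕ) < (i:ℕ))) from
              by rintro ⟨-, -, hc⟩; omega),
            show (n+n) - ((n + (j:ℕ)) - (i:ℕ)) = n - ((j:ℕ) - (i:ℕ)) by omega]
          ring
        · rw [if_pos hmain,
            if_pos (show x i = b ∧ (x j = b ∧ (i:ℕ) = (j:ℕ)) from ⟨hb.1, hb.2, h⟩),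
            if_neg (show ¬(x i = b ∧ (x j = b ∧ (i:ℕ) < (j:ℕ))) from
              by rintro ⟨-, -, hc⟩; omega),
            if_neg (show ¬(x i = b ∧ (x j = b ∧ (j:ℕ) < (i:ℕ))) from
              by rintro ⟨-, -, hc⟩; omega),
            show (n+n) - ((n + (j:ℕ)) - (i:ℕ)) = n by omega]
          ring
        · rw [if_pos hmain,
            if_pos (show x i = b ∧ (x j = b ∧ (j:ℕ) < (i:ℕ)) from ⟨hb.1, hb.2, h⟩),
            if_neg (show ¬(x i = b ∧ (x j = b ∧ (i:ℕ) < (j:ℕ))) from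
              by rintro ⟨-, -, hc⟩; omega),
            if_neg (show ¬(x i = b ∧ (x j = b ∧ (i:ℕ) = (j:ℕ))) from
              by rintro ⟨-, -, hc⟩; omega),
            show (n+n) - ((n + (j:ℕ)) - (i:ℕ)) = n + ((i:ℕ) - (j:ℕ)) by omega, pow_add]
          ring
      · rw [if_neg (by rintro ⟨h1, h2, -⟩; exact hb ⟨h1, h2⟩),
          if_neg (show ¬(x i = b ∧ (x j = b ∧ (i:ℕ) < (j:ℕ))) from
            by rintro ⟨h1, h2, -⟩; exact hb ⟨h1, h2⟩),
          if_neg (show ¬(x i = b ∧ (x j = b ∧ (i:ℕ) = (j:ℕ))) from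
            by rintro ⟨h1, h2, -⟩; exact hb ⟨h1, h2⟩),
          if_neg (show ¬(x i = b ∧ (x j = b ∧ (j:ℕ) < (i:ℕ))) from
            by rintro ⟨h1, h2, -⟩; exact hb ⟨h1, h2⟩)]
        ring
    have hEq : (∑ i : Fin n, ∑ j : Fin n,
        if x i = b ∧ (x j = b ∧ (i:ℕ) = (j:ℕ)) then ((1:ℝ)/2) ^ n else 0) = C := by
      rw [hC]
      refine Finset.sum_congr rfl fun i _ => ?_
      rw [Finset.sum_eq_single_of_mem i (Finset.mem_univ i)]
      · by_cases h : x i = b <;> simp [h]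
      · intro j _ hj
        rw [if_neg]
        rintro ⟨-, -, h⟩
        exact hj (Fin.ext h.symm)
    have hGt : (∑ i : Fin n, ∑ j : Fin n,
        if x i = b ∧ (x j = b ∧ (j:ℕ) < (i:ℕ))
        then ((1:ℝ)/2) ^ n * ((1:ℝ)/2) ^ ((i:ℕ) - (j:ℕ)) else 0) = ((1:ℝ)/2)^n * Sa := by
      rw [hSa, Finset.mul_sum, Finset.sum_comm]
      refine Finset.sum_congr rfl fun i _ => ?_
      rw [Finset.mul_sum]
      refine Finset.sum_congr rfl fun j _ => ?_
      rw [mul_ite, mul_zero]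
      split_ifs with h1 h2 h2
      · rfl
      · exact absurd ⟨h1.2.1, h1.1, h1.2.2⟩ h2
      · exact absurd ⟨h2.2.1, h2.1, h2.2.2⟩ h1
      · rfl
    calc (∑ i : Fin n, ∑ j : Fin n,
        if x i = b ∧ (x j = b ∧ (i:ℕ) < n + (j:ℕ))
        then ((1:ℝ)/2) ^ ((n+n) - ((n + (j:ℕ)) - (i:ℕ))) else 0)
        = (∑ i : Fin n, ∑ j : Fin n,
            ((if x i = b ∧ (x j = b ∧ (i:ℕ) < (j:ℕ))
              then ((1:ℝ)/2) ^ (n - ((j:ℕ) - (i:ℕ))) else 0)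
            + (if x i = b ∧ (x j = b ∧ (i:ℕ) = (j:ℕ))
               then ((1:ℝ)/2) ^ n else 0)
            + (if x i = b ∧ (x j = b ∧ (j:ℕ) < (i:ℕ))
               then ((1:ℝ)/2) ^ n * ((1:ℝ)/2) ^ ((i:ℕ) - (j:ℕ)) else 0))) :=
          Finset.sum_congr rfl fun i _ => Finset.sum_congr rfl fun j _ => split i j
      _ = Sb + ((1:ℝ)/2)^n * Sa + C := by
          simp only [Finset.sum_add_distrib]
          rw [hEq, hGt, ← hSb]
          ring
  rw [hLL, hRR, hRL, hLR]
  have key : ((1:ℝ)/2)^(n-1) * ((1:ℝ)/2) = ((1:ℝ)/2)^n := by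
    rw [← pow_succ]
    congr 1
    omega
  linear_combination (-2 : ℝ) * Sb * key

/-- Lemma 3(c): `β_{x‖x} = β_x + (1/2)^{n-1}·β_x + (1/2)^n·α_x + n·(1/2)^n`. -/
theorem beta_append_self (n : ℕ) (hn : 1 ≤ n) (x : Fin n → Bool) :
    betaC (Fin.append x x) =
      betaC x + ((1:ℝ)/2) ^ (n - 1) * betaC x + ((1:ℝ)/2) ^ n * alphaC x
        + (n : ℝ) * ((1:ℝ)/2) ^ n := by
  have hC : (∑ i : Fin n, if x i = false then ((1:ℝ)/2)^n else 0)
      + (∑ i : Fin n, if x i = true then ((1:ℝ)/2)^n else 0)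
      = (n:ℝ) * ((1:ℝ)/2)^n := by
    rw [← Finset.sum_add_distrib]
    have hpt : ∀ i ∈ (univ : Finset (Fin n)),
        ((if x i = false then ((1:ℝ)/2)^n else 0)
          + (if x i = true then ((1:ℝ)/2)^n else 0)) = ((1:ℝ)/2)^n := by
      intro i _
      cases h : x i <;> simp [h]
    rw [Finset.sum_congr rfl hpt, Finset.sum_const, Finset.card_univ,
      Fintype.card_fin, nsmul_eq_mul]
  unfold betaC alphaC
  simp only [Finset.sum_filter, ite_sum_merge]
  rw [quad n hn x false, quad n hn x true]
  linear_combination hC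
end

section
/- Let x be a binary sequence of length n ≥ 1 and let x̌ = x‖x̄ be the concatenation of x with its bitwise complement (of length 2n). Then β_{x̌} = γ_x + (1/2)^{n−1}·β_x + (1/2)^n·δ_x, where the coefficients of x̌ are computed with respect to its length 2n. -/
open Finset

lemma myIteAdd {p : Prop} [Decidable p] (a b : ℝ) :
    (if p then a + b else 0) = (if p then a else 0) + (if p then b else 0) := by
  split <;> simp

lemma myIteHoist {α : Type*} {p : Prop} [Decidable p] (s : Finset α) (g : α → ℝ) :
    (if p then (∑ b ∈ s, g b) else 0) = ∑ b ∈ s, if p then g b else 0 := by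
  split <;> simp


/-- Lemma 3(d): `β_{x‖x̄} = γ_x + (1/2)^{n-1}·β_x + (1/2)^n·δ_x`. -/
theorem beta_append_compl (n : ℕ) (hn : 1 ≤ n) (x : Fin n → Bool) :
    betaC (Fin.append x (fun i => !(x i))) =
      gammaC x + ((1:ℝ)/2) ^ (n - 1) * betaC x + ((1:ℝ)/2) ^ n * deltaC x := by
  simp only [betaC, gammaC, deltaC, Finset.sum_filter, Fin.sum_univ_add, Fin.append_left,
    Fin.append_right, Fin.lt_def, Fin.coe_castAdd, Fin.coe_natAdd, myIteAdd,
    myIteHoist, ← ite_and, Finset.sum_add_distrib, mul_add, Finset.mul_sum, mul_ite, mul_zero,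
    Bool.not_eq_false', Bool.not_eq_true']
  -- impossible quadrants
  have hL2 : (∑ a : Fin n, ∑ b : Fin n,
      if x a = true ∧ x b = false ∧ n + (a:ℕ) < (b:ℕ) then ((1:ℝ)/2) ^ (n + n - ((b:ℕ) - (n + (a:ℕ)))) else 0) = 0 := by
    refine Finset.sum_eq_zero fun a _ => Finset.sum_eq_zero fun b _ => ?_
    have hb := b.isLt
    rw [if_neg]; rintro ⟨-, -, h⟩; omega
  have hL6 : (∑ a : Fin n, ∑ b : Fin n,
      if x a = false ∧ x b = true ∧ n + (a:ℕ) < (b:ℕ) then ((1:ℝ)/2) ^ (n + n - ((b:ℕ) - (n + (a:ℕ)))) else 0) = 0 := by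
    refine Finset.sum_eq_zero fun a _ => Finset.sum_eq_zero fun b _ => ?_
    have hb := b.isLt
    rw [if_neg]; rintro ⟨-, -, h⟩; omega
  -- beta parts
  have hB : ∀ v : Bool, (∑ a : Fin n, ∑ b : Fin n,
      if x a = v ∧ x b = v ∧ (a:ℕ) < (b:ℕ) then ((1:ℝ)/2) ^ (n - 1) * ((1:ℝ)/2) ^ (n - ((b:ℕ) - (a:ℕ))) else 0)
      = (∑ a : Fin n, ∑ b : Fin n,
          if x a = v ∧ x b = v ∧ (a:ℕ) < (b:ℕ) then ((1:ℝ)/2) ^ (n + n - ((b:ℕ) - (a:ℕ))) else 0)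
        + ∑ a : Fin n, ∑ b : Fin n,
          if x a = v ∧ x b = v ∧ n + (a:ℕ) < n + (b:ℕ) then ((1:ℝ)/2) ^ (n + n - (n + (b:ℕ) - (n + (a:ℕ)))) else 0 := by
    intro v
    rw [← Finset.sum_add_distrib]
    refine Finset.sum_congr rfl fun a _ => ?_
    rw [← Finset.sum_add_distrib]
    refine Finset.sum_congr rfl fun b _ => ?_
    have ha := a.isLt; have hb := b.isLt
    by_cases hc : x a = v ∧ x b = v ∧ (a:ℕ) < b
    · rw [if_pos hc, if_pos hc, if_pos ⟨hc.1, hc.2.1, by omega⟩]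
      have e1 : n + n - (n + (b:ℕ) - (n + (a:ℕ))) = n + n - ((b:ℕ) - (a:ℕ)) := by omega
      rw [e1]
      obtain ⟨k, hk⟩ : ∃ k, n + n - ((b:ℕ) - ↑a) = k + 1 := ⟨n + n - ((b:ℕ) - ↑a) - 1, by omega⟩
      have e2 : (n - 1) + (n - ((b:ℕ) - ↑a)) = k := by omega
      rw [← pow_add, e2, hk, pow_succ]
      ring
    · rw [if_neg hc, if_neg hc, if_neg (by rintro ⟨h1, h2, h3⟩; exact hc ⟨h1, h2, by omega⟩), add_zero]
  -- cross quadrants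
  have hC : ∀ v : Bool, (∑ a : Fin n, ∑ b : Fin n,
      if x a = v ∧ x b = (!v) ∧ (a:ℕ) < n + (b:ℕ) then ((1:ℝ)/2) ^ (n + n - (n + (b:ℕ) - (a:ℕ))) else 0)
      = (∑ a : Fin n, ∑ b : Fin n,
          if x a = v ∧ x b = (!v) ∧ (a:ℕ) < (b:ℕ) then ((1:ℝ)/2) ^ (n - ((b:ℕ) - (a:ℕ))) else 0)
        + ∑ a : Fin n, ∑ b : Fin n,
          if x a = (!v) ∧ x b = v ∧ (a:ℕ) < (b:ℕ) then ((1:ℝ)/2) ^ n * ((1:ℝ)/2) ^ ((b:ℕ) - (a:ℕ)) else 0 := by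
    intro v
    have hswap : (∑ a : Fin n, ∑ b : Fin n,
        if x a = (!v) ∧ x b = v ∧ (a:ℕ) < (b:ℕ) then ((1:ℝ)/2) ^ n * ((1:ℝ)/2) ^ ((b:ℕ) - ↑a) else 0)
        = ∑ a : Fin n, ∑ b : Fin n,
          if x a = v ∧ x b = (!v) ∧ (b:ℕ) < ↑a then ((1:ℝ)/2) ^ n * ((1:ℝ)/2) ^ ((a:ℕ) - ↑b) else 0 := by
      rw [Finset.sum_comm]
      exact Finset.sum_congr rfl fun i _ => Finset.sum_congr rfl fun j _ =>
        if_congr (by tauto) rfl rfl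
    rw [hswap, ← Finset.sum_add_distrib]
    refine Finset.sum_congr rfl fun a _ => ?_
    rw [← Finset.sum_add_distrib]
    refine Finset.sum_congr rfl fun b _ => ?_
    have ha := a.isLt; have hb := b.isLt
    by_cases h1 : x a = v ∧ x b = (!v) ∧ (a:ℕ) < b
    · rw [if_pos ⟨h1.1, h1.2.1, by omega⟩, if_pos h1, if_neg (by rintro ⟨-, -, h⟩; omega)]
      have e : n + n - (n + (b:ℕ) - (a:ℕ)) = n - ((b:ℕ) - ↑a) := by omega
      rw [e, add_zero]
    · by_cases h2 : x a = v ∧ x b = (!v) ∧ (b:ℕ) < a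
      · rw [if_pos ⟨h2.1, h2.2.1, by omega⟩, if_neg h1, if_pos h2]
        have e : n + n - (n + (b:ℕ) - (a:ℕ)) = n + ((a:ℕ) - ↑b) := by omega
        rw [e, pow_add, zero_add]
      · rw [if_neg, if_neg h1, if_neg h2, add_zero]
        rintro ⟨hxa, hxb, hlt⟩
        rcases lt_trichotomy (a:ℕ) (b:ℕ) with h | h | h
        · exact h1 ⟨hxa, hxb, h⟩
        · have hab : a = b := Fin.ext h
          rw [hab] at hxa; rw [hxa] at hxb; simp at hxb
        · exact h2 ⟨hxa, hxb, h⟩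
  have hBf := hB false; have hBt := hB true
  have hCf := hC false; have hCt := hC true
  simp only [Bool.not_false, Bool.not_true] at hCf hCt
  linarith
end

section
/- Let x be a binary sequence of length n ≥ 1 and let x̂ = x‖x be the concatenation of x with itself (of length 2n). Then γ_{x̂} = γ_x + (1/2)^{n−1}·γ_x + (1/2)^n·δ_x, where the coefficients of x̂ are computed with respect to its length 2n. -/
open Finset

lemma filt {m : ℕ} (x : Fin m → Bool) (w : Fin m → Fin m → ℝ) :
    ((∑ i ∈ univ.filter (fun i : Fin m => x i = false),
       ∑ j ∈ univ.filter (fun j : Fin m => x j = true ∧ i < j), w i j)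
     + ∑ i ∈ univ.filter (fun i : Fin m => x i = true),
        ∑ j ∈ univ.filter (fun j : Fin m => x j = false ∧ i < j), w i j)
    = ∑ i, ∑ j, if x i ≠ x j ∧ i < j then w i j else 0 := by
  rw [sum_filter, sum_filter, ← sum_add_distrib]
  refine sum_congr rfl fun i _ => ?_
  cases hi : x i
  · rw [if_pos rfl, if_neg (by simp), add_zero, sum_filter]
    refine sum_congr rfl fun j _ => ?_
    cases hj : x j <;> simp [hi, hj]
  · rw [if_neg (by simp), if_pos rfl, zero_add, sum_filter]
    refine sum_congr rfl fun j _ => ?_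
    cases hj : x j <;> simp [hi, hj]

/-- Lemma 3(e): `γ_{x‖x} = γ_x + (1/2)^{n-1}·γ_x + (1/2)^n·δ_x`. -/
theorem gamma_append_self (n : ℕ) (hn : 1 ≤ n) (x : Fin n → Bool) :
    gammaC (Fin.append x x) =
      gammaC x + ((1:ℝ)/2) ^ (n - 1) * gammaC x + ((1:ℝ)/2) ^ n * deltaC x := by
  have hg : gammaC x = ∑ i : Fin n, ∑ j : Fin n,
      if x i ≠ x j ∧ (i : ℕ) < (j : ℕ) then ((1:ℝ)/2) ^ (n - ((j:ℕ) - (i:ℕ))) else 0 := by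
    rw [gammaC, filt]; simp only [Fin.lt_def]
  have hd : deltaC x = ∑ i : Fin n, ∑ j : Fin n,
      if x i ≠ x j ∧ (i : ℕ) < (j : ℕ) then ((1:ℝ)/2) ^ ((j:ℕ) - (i:ℕ)) else 0 := by
    rw [deltaC, filt]; simp only [Fin.lt_def]
  have hG : gammaC (Fin.append x x) = ∑ i : Fin (n+n), ∑ j : Fin (n+n),
      if Fin.append x x i ≠ Fin.append x x j ∧ (i : ℕ) < (j : ℕ) then
        ((1:ℝ)/2) ^ ((n+n) - ((j:ℕ) - (i:ℕ))) else 0 := by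
    rw [gammaC, filt]; simp only [Fin.lt_def]
  rw [hG]
  simp only [Fin.sum_univ_add, Fin.append_left, Fin.append_right, Fin.coe_castAdd,
    Fin.coe_natAdd]
  rw [sum_add_distrib, sum_add_distrib]
  have h11 : (∑ a : Fin n, ∑ b : Fin n,
      if x a ≠ x b ∧ (a : ℕ) < (b : ℕ) then ((1:ℝ)/2) ^ ((n+n) - ((b:ℕ) - (a:ℕ))) else 0)
      = ((1:ℝ)/2) ^ n * gammaC x := by
    rw [hg, mul_sum]
    refine sum_congr rfl fun a _ => ?_
    rw [mul_sum]
    refine sum_congr rfl fun b _ => ?_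
    split_ifs with h
    · rw [← pow_add]
      congr 1
      have := b.isLt
      omega
    · rw [mul_zero]
  have h21 : (∑ a : Fin n, ∑ b : Fin n,
      if x a ≠ x b ∧ n + (a : ℕ) < (b : ℕ) then
        ((1:ℝ)/2) ^ ((n+n) - ((b:ℕ) - (n + (a:ℕ)))) else 0) = 0 := by
    refine sum_eq_zero fun a _ => sum_eq_zero fun b _ => ?_
    rw [if_neg]
    rintro ⟨-, h⟩
    have := b.isLt
    omega
  have h22 : (∑ a : Fin n, ∑ b : Fin n,
      if x a ≠ x b ∧ n + (a : ℕ) < n + (b : ℕ) then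
        ((1:ℝ)/2) ^ ((n+n) - ((n + (b:ℕ)) - (n + (a:ℕ)))) else 0)
      = ((1:ℝ)/2) ^ n * gammaC x := by
    rw [hg, mul_sum]
    refine sum_congr rfl fun a _ => ?_
    rw [mul_sum]
    refine sum_congr rfl fun b _ => ?_
    by_cases hx : x a ≠ x b
    · by_cases hab : (a : ℕ) < (b : ℕ)
      · rw [if_pos ⟨hx, by omega⟩, if_pos ⟨hx, hab⟩, ← pow_add]
        congr 1
        have := b.isLt
        omega
      · rw [if_neg (fun h => hab (Nat.lt_of_add_lt_add_left h.2)),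
          if_neg (fun h => hab h.2), mul_zero]
    · rw [if_neg (fun h => hx h.1), if_neg (fun h => hx h.1), mul_zero]
  have h12 : (∑ a : Fin n, ∑ b : Fin n,
      if x a ≠ x b ∧ (a : ℕ) < n + (b : ℕ) then
        ((1:ℝ)/2) ^ ((n+n) - ((n + (b:ℕ)) - (a:ℕ))) else 0)
      = gammaC x + ((1:ℝ)/2) ^ n * deltaC x := by
    have step : (∑ a : Fin n, ∑ b : Fin n,
        if x a ≠ x b ∧ (a : ℕ) < n + (b : ℕ) then
          ((1:ℝ)/2) ^ ((n+n) - ((n + (b:ℕ)) - (a:ℕ))) else 0)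
        = (∑ a : Fin n, ∑ b : Fin n,
            if x a ≠ x b ∧ (a : ℕ) < (b : ℕ) then ((1:ℝ)/2) ^ (n - ((b:ℕ) - (a:ℕ))) else 0)
          + (∑ a : Fin n, ∑ b : Fin n,
              if x a ≠ x b ∧ (b : ℕ) < (a : ℕ) then
                ((1:ℝ)/2) ^ n * ((1:ℝ)/2) ^ ((a:ℕ) - (b:ℕ)) else 0) := by
      rw [← sum_add_distrib]
      refine sum_congr rfl fun a _ => ?_
      rw [← sum_add_distrib]
      refine sum_congr rfl fun b _ => ?_
      by_cases hx : x a ≠ x b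
      · have ha := a.isLt
        have hb := b.isLt
        rcases Nat.lt_trichotomy (a : ℕ) (b : ℕ) with hab | hab | hab
        · rw [if_pos ⟨hx, by omega⟩, if_pos ⟨hx, hab⟩,
            if_neg (by rintro ⟨-, h2⟩; omega), add_zero]
          congr 1
          omega
        · exact absurd (congrArg x (Fin.ext hab)) hx
        · rw [if_pos ⟨hx, by omega⟩, if_neg (by rintro ⟨-, h2⟩; omega),
            if_pos ⟨hx, hab⟩, zero_add, ← pow_add]
          congr 1
          omega
      · rw [if_neg (fun h => hx h.1), if_neg (fun h => hx h.1), if_neg (fun h => hx h.1),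
          add_zero]
    rw [step, hg, hd, mul_sum]
    congr 1
    rw [sum_comm]
    refine sum_congr rfl fun a _ => ?_
    rw [mul_sum]
    refine sum_congr rfl fun b _ => ?_
    by_cases h1 : x a ≠ x b ∧ (a : ℕ) < (b : ℕ)
    · rw [if_pos ⟨Ne.symm h1.1, h1.2⟩, if_pos h1]
    · rw [if_neg (fun h => h1 ⟨Ne.symm h.1, h.2⟩), if_neg h1, mul_zero]
  rw [h11, h21, h22, h12]
  obtain ⟨m, rfl⟩ : ∃ m, n = m + 1 := ⟨n - 1, (Nat.succ_pred_eq_of_pos hn).symm⟩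
  simp only [Nat.add_sub_cancel]
  rw [pow_succ]
  ring
end
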